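/- arXiv:2507.16301 — 2 statements merged into one kernel-verified Lean document; each statement's English description precedes it below -/
import Mathlib

section
/- For every simple graph G, the total chromatic number of its central graph satisfies χ''(C(G)) ≤ Δ(C(G)) + 2; that is, the Total-Coloring Conjecture holds for the central graph of any graph. -/
open SimpleGraph

/-- The subdivision graph `S(G)`: each edge `{u,v}` of `G` is replaced by a new
vertex (the element of `G.edgeSet`) adjacent to both `u` and `v`. -/
def subdivisionGraph {V : Type*} (G : SimpleGraph V) : SimpleGraph (V ⊕ G.edgeSet) where
  Adj x y :=
    match x, y with
    | Sum.inl u, Sum.inr e => u ∈ (e : Sym2 V)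
    | Sum.inr e, Sum.inl u => u ∈ (e : Sym2 V)
    | _, _ => False
  symm := by constructor; rintro (u | e) (v | f) h <;> simp_all
  loopless := by constructor; rintro (u | e) h <;> simp_all

/-- The central graph `C(G)`: obtained from the subdivision graph `S(G)` by joining
every pair of distinct vertices of `G` that are non-adjacent in `G`. -/
def centralGraph {V : Type*} (G : SimpleGraph V) : SimpleGraph (V ⊕ G.edgeSet) where
  Adj x y :=
    match x, y with
    | Sum.inl u, Sum.inl v => u ≠ v ∧ ¬ G.Adj u v
    | Sum.inl u, Sum.inr e => u ∈ (e : Sym2 V)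
    | Sum.inr e, Sum.inl u => u ∈ (e : Sym2 V)
    | Sum.inr _, Sum.inr _ => False
  symm := by
    constructor
    rintro (u | e) (v | f) h
    · exact ⟨h.1.symm, fun a => h.2 a.symm⟩
    · exact h
    · exact h
    · exact h
  loopless := by
    constructor
    rintro (u | e) h
    · exact h.1 rfl
    · exact h

/-- The middle graph `M(G)`: obtained from the subdivision graph `S(G)` by joining
each pair of distinct subdivided vertices corresponding to adjacent edges of `G`. -/
def middleGraph {V : Type*} (G : SimpleGraph V) : SimpleGraph (V ⊕ G.edgeSet) where
  Adj x y :=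
    match x, y with
    | Sum.inl u, Sum.inr e => u ∈ (e : Sym2 V)
    | Sum.inr e, Sum.inl u => u ∈ (e : Sym2 V)
    | Sum.inr e, Sum.inr f => e ≠ f ∧ ∃ u, u ∈ (e : Sym2 V) ∧ u ∈ (f : Sym2 V)
    | Sum.inl _, Sum.inl _ => False
  symm := by
    constructor
    rintro (u | e) (v | f) h
    · exact h
    · exact h
    · exact h
    · exact ⟨h.1.symm, h.2.imp fun u hu => ⟨hu.2, hu.1⟩⟩
  loopless := by
    constructor
    rintro (u | e) h
    · exact h
    · exact h.1 rfl

/-- The line graph `L(G)`: vertices are the edges of `G`, two distinct edges being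
adjacent when they share an endpoint. -/
def lineG {V : Type*} (G : SimpleGraph V) : SimpleGraph G.edgeSet where
  Adj e f := e ≠ f ∧ ∃ u, u ∈ (e : Sym2 V) ∧ u ∈ (f : Sym2 V)
  symm := ⟨fun e f h => ⟨h.1.symm, h.2.imp fun u hu => ⟨hu.2, hu.1⟩⟩⟩
  loopless := ⟨fun e h => h.1 rfl⟩

/-- The endline graph `G⁺`: to each vertex `v` of `G` we attach a new pendant
vertex; `Sum.inl` is the copy of `V(G)` and `Sum.inr` are the new vertices. -/
def endlineGraph {V : Type*} (G : SimpleGraph V) : SimpleGraph (V ⊕ V) where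
  Adj x y :=
    match x, y with
    | Sum.inl u, Sum.inl v => G.Adj u v
    | Sum.inl u, Sum.inr v => u = v
    | Sum.inr u, Sum.inl v => u = v
    | Sum.inr _, Sum.inr _ => False
  symm := by
    constructor
    rintro (u | u) (v | v) h
    · exact h.symm
    · exact h.symm
    · exact h.symm
    · exact h
  loopless := by
    constructor
    rintro (u | u) h
    · exact G.loopless.irrefl u h
    · exact h

/-- The join `G₁ + G₂` of two vertex-disjoint graphs: their disjoint union together
with all edges between the two vertex sets. -/
def joinGraph {V₁ V₂ : Type*} (G₁ : SimpleGraph V₁) (G₂ : SimpleGraph V₂) :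
    SimpleGraph (V₁ ⊕ V₂) where
  Adj x y :=
    match x, y with
    | Sum.inl u, Sum.inl v => G₁.Adj u v
    | Sum.inr u, Sum.inr v => G₂.Adj u v
    | Sum.inl _, Sum.inr _ => True
    | Sum.inr _, Sum.inl _ => True
  symm := by
    constructor
    rintro (u | u) (v | v) h
    · exact h.symm
    · trivial
    · trivial
    · exact h.symm
  loopless := by
    constructor
    rintro (u | u) h
    · exact G₁.loopless.irrefl u h
    · exact G₂.loopless.irrefl u h

/-- The maximum degree `Δ(H)` of a graph (as a supremum of cardinalities of
neighborhoods, which agrees with the usual maximum degree for finite graphs). -/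
noncomputable def maxDeg {W : Type*} (H : SimpleGraph W) : ℕ :=
  sSup {k | ∃ v : W, k = (H.neighborSet v).ncard}

/-- A graph is regular if all vertices have the same degree. -/
def IsRegularGraph {W : Type*} (H : SimpleGraph W) : Prop :=
  ∀ u v : W, (H.neighborSet u).ncard = (H.neighborSet v).ncard

/-- The distinguishing number `D(H)`: the least `d` such that `H` admits a vertex
coloring with `d` colors preserved only by the identity automorphism. -/
noncomputable def distinguishingNumber {W : Type*} (H : SimpleGraph W) : ℕ :=
  sInf {d | ∃ c : W → Fin d, ∀ φ : H ≃g H, (∀ v, c (φ v) = c v) → ∀ v, φ v = v}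

/-- The distinguishing index `D'(H)`: the least `d` such that `H` admits an edge
coloring with `d` colors preserved only by the identity automorphism. -/
noncomputable def distinguishingIndex {W : Type*} (H : SimpleGraph W) : ℕ :=
  sInf {d | ∃ c : H.edgeSet → Fin d,
    ∀ φ : H ≃g H, (∀ e, c (φ.mapEdgeSet e) = c e) → ∀ v, φ v = v}

/-- A proper total coloring of `H` with `d` colors: adjacent vertices, adjacent
edges, and incident vertex/edge pairs receive distinct colors. -/
def IsProperTotalColoring {W : Type*} (H : SimpleGraph W) {d : ℕ}
    (f : W ⊕ H.edgeSet → Fin d) : Prop :=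
  (∀ u v : W, H.Adj u v → f (Sum.inl u) ≠ f (Sum.inl v)) ∧
  (∀ e e' : H.edgeSet, e ≠ e' → (∃ u, u ∈ (e : Sym2 W) ∧ u ∈ (e' : Sym2 W)) →
    f (Sum.inr e) ≠ f (Sum.inr e')) ∧
  (∀ (v : W) (e : H.edgeSet), v ∈ (e : Sym2 W) → f (Sum.inl v) ≠ f (Sum.inr e))

/-- An automorphism `φ` preserves a total coloring `f`. -/
def PreservesTotalColoring {W : Type*} (H : SimpleGraph W) {d : ℕ}
    (f : W ⊕ H.edgeSet → Fin d) (φ : H ≃g H) : Prop :=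
  (∀ v : W, f (Sum.inl (φ v)) = f (Sum.inl v)) ∧
  (∀ e : H.edgeSet, f (Sum.inr (φ.mapEdgeSet e)) = f (Sum.inr e))

/-- The total chromatic number `χ''(H)`. -/
noncomputable def totalChromaticNumber {W : Type*} (H : SimpleGraph W) : ℕ :=
  sInf {d | ∃ f : W ⊕ H.edgeSet → Fin d, IsProperTotalColoring H f}

/-- The total distinguishing chromatic number `χ''_D(H)`: the least `d` such that
`H` has a proper total coloring with `d` colors preserved only by the identity. -/
noncomputable def totalDistinguishingChromaticNumber {W : Type*} (H : SimpleGraph W) : ℕ :=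
  sInf {d | ∃ f : W ⊕ H.edgeSet → Fin d, IsProperTotalColoring H f ∧
    ∀ φ : H ≃g H, PreservesTotalColoring H f φ → ∀ v, φ v = v}

/-- The color class `C_H(u)` of a vertex under a total coloring: the color of `u`
together with the colors of the edges incident to `u`. -/
def totalColorClass {W : Type*} (H : SimpleGraph W) {d : ℕ}
    (f : W ⊕ H.edgeSet → Fin d) (u : W) : Set (Fin d) :=
  {f (Sum.inl u)} ∪ {x | ∃ e : H.edgeSet, u ∈ (e : Sym2 W) ∧ x = f (Sum.inr e)}

/-- An AVD-total coloring: a proper total coloring in which adjacent vertices have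
distinct color classes. -/
def IsAVDTotalColoring {W : Type*} (H : SimpleGraph W) {d : ℕ}
    (f : W ⊕ H.edgeSet → Fin d) : Prop :=
  IsProperTotalColoring H f ∧
  ∀ u v : W, H.Adj u v → totalColorClass H f u ≠ totalColorClass H f v

/-- The AVD-total chromatic number `χ''ₐ(H)`. -/
noncomputable def avdTotalChromaticNumber {W : Type*} (H : SimpleGraph W) : ℕ :=
  sInf {d | ∃ f : W ⊕ H.edgeSet → Fin d, IsAVDTotalColoring H f}

/-- A total dominator coloring: a proper vertex coloring such that every vertex is
adjacent to every vertex of some (nonempty) color class. -/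
def IsTotalDominatorColoring {W : Type*} (H : SimpleGraph W) {d : ℕ}
    (c : W → Fin d) : Prop :=
  (∀ u v : W, H.Adj u v → c u ≠ c v) ∧
  (∀ v : W, ∃ i : Fin d, (∃ w, c w = i) ∧ ∀ w, c w = i → H.Adj v w)

/-- The total dominator chromatic number `χᵗ_d(H)`. -/
noncomputable def tdChromaticNumber {W : Type*} (H : SimpleGraph W) : ℕ :=
  sInf {d | ∃ c : W → Fin d, IsTotalDominatorColoring H c}

section Aux
variable {V : Type*} (G : SimpleGraph V) {d : ℕ}

open Classical in
noncomputable def pend (π : V → V → ZMod d) (u : V) (e₀ : G.edgeSet) : ZMod d :=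
  if h : u ∈ (e₀ : Sym2 V) then π u (Sym2.Mem.other h) else 0

lemma pend_eq (π : V → V → ZMod d) (u v : V) (e₀ : G.edgeSet)
    (h : (e₀ : Sym2 V) = s(u, v)) : pend G π u e₀ = π u v := by
  have hu : u ∈ (e₀ : Sym2 V) := by rw [h]; exact Sym2.mem_mk_left u v
  rw [pend, dif_pos hu]
  congr 1
  exact Sym2.congr_right.mp ((Sym2.other_spec hu).trans h)

lemma rep_of_mem (e₀ : G.edgeSet) (u : V) (hu : u ∈ (e₀ : Sym2 V)) :
    ∃ v, G.Adj u v ∧ (e₀ : Sym2 V) = s(u, v) := by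
  refine ⟨Sym2.Mem.other hu, ?_, (Sym2.other_spec hu).symm⟩
  have h2 := e₀.2
  rw [← Sym2.other_spec hu] at h2
  exact G.mem_edgeSet.mp h2

noncomputable def gfun (ι : V → ZMod d) (π : V → V → ZMod d) :
    V ⊕ G.edgeSet → V ⊕ G.edgeSet → ZMod d
  | Sum.inl u, Sum.inl v => ι u + ι v
  | Sum.inl u, Sum.inr e => pend G π u e
  | Sum.inr e, Sum.inl u => pend G π u e
  | Sum.inr _, Sum.inr _ => 0

lemma gfun_symm (ι : V → ZMod d) (π : V → V → ZMod d) :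
    ∀ x y, gfun G ι π x y = gfun G ι π y x := by
  rintro (u | e) (v | f) <;> simp [gfun, add_comm]

noncomputable def fcol (ι : V → ZMod d) (π : V → V → ZMod d) (τ : G.edgeSet → ZMod d) :
    (V ⊕ G.edgeSet) ⊕ (centralGraph G).edgeSet → ZMod d
  | Sum.inl (Sum.inl u) => ι u - 1
  | Sum.inl (Sum.inr e₀) => τ e₀
  | Sum.inr E => Sym2.lift ⟨gfun G ι π, gfun_symm G ι π⟩ (E : Sym2 (V ⊕ G.edgeSet))

lemma central_edge_cases (E : (centralGraph G).edgeSet) :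
    (∃ u v, u ≠ v ∧ ¬G.Adj u v ∧ (E : Sym2 (V ⊕ G.edgeSet)) = s(Sum.inl u, Sum.inl v)) ∨
    (∃ (u : V) (e₀ : G.edgeSet), u ∈ (e₀ : Sym2 V) ∧
      (E : Sym2 (V ⊕ G.edgeSet)) = s(Sum.inl u, Sum.inr e₀)) := by
  obtain ⟨e, he⟩ := E
  revert he
  induction e using Sym2.ind with
  | _ x y =>
    intro he
    have hadj : (centralGraph G).Adj x y := (centralGraph G).mem_edgeSet.mp he
    rcases x with u | e₀ <;> rcases y with v | f₀
    · exact Or.inl ⟨u, v, hadj.1, hadj.2, rfl⟩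
    · exact Or.inr ⟨u, f₀, hadj, rfl⟩
    · exact Or.inr ⟨v, e₀, hadj, Sym2.eq_swap⟩
    · exact (hadj : False).elim

lemma fcol_comp (ι : V → ZMod d) (π : V → V → ZMod d) (τ : G.edgeSet → ZMod d)
    (E : (centralGraph G).edgeSet) (u v : V)
    (h : (E : Sym2 (V ⊕ G.edgeSet)) = s(Sum.inl u, Sum.inl v)) :
    fcol G ι π τ (Sum.inr E) = ι u + ι v := by
  show Sym2.lift _ (E : Sym2 (V ⊕ G.edgeSet)) = _
  rw [h, Sym2.lift_mk]
  rfl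

lemma fcol_pend (ι : V → ZMod d) (π : V → V → ZMod d) (τ : G.edgeSet → ZMod d)
    (E : (centralGraph G).edgeSet) (u v : V) (e₀ : G.edgeSet)
    (h : (E : Sym2 (V ⊕ G.edgeSet)) = s(Sum.inl u, Sum.inr e₀))
    (h2 : (e₀ : Sym2 V) = s(u, v)) :
    fcol G ι π τ (Sum.inr E) = π u v := by
  show Sym2.lift _ (E : Sym2 (V ⊕ G.edgeSet)) = _
  rw [h, Sym2.lift_mk]
  exact pend_eq G π u v e₀ h2

end Aux

section LemA
variable {V : Type*} (G : SimpleGraph V) {d : ℕ}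

lemma sum_ne_of {ι : V → ZMod d} (hι : Function.Injective ι) (a b a' b' : V)
    (hne : (s(a, b) : Sym2 V) ≠ s(a', b'))
    (hsh : a = a' ∨ a = b' ∨ b = a' ∨ b = b') : ι a + ι b ≠ ι a' + ι b' := by
  rcases hsh with rfl | rfl | rfl | rfl
  · intro hEq
    exact hne (by rw [hι (add_left_cancel hEq)])
  · intro hEq
    rw [add_comm (ι a') (ι a)] at hEq
    have : b = a' := hι (add_left_cancel hEq)
    exact hne (by rw [this, Sym2.eq_swap])
  · intro hEq
    rw [add_comm (ι a) (ι b)] at hEq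
    have : a = b' := hι (add_left_cancel hEq)
    exact hne (by rw [this, Sym2.eq_swap])
  · intro hEq
    rw [add_comm (ι a) (ι b), add_comm (ι a') (ι b)] at hEq
    exact hne (by rw [hι (add_left_cancel hEq)])

lemma comp_ne_pend {ι : V → ZMod d} (hι : Function.Injective ι) {π : V → V → ZMod d}
    (hπ1 : ∀ u v, G.Adj u v → ∃ y, (y = u ∨ G.Adj u y) ∧ π u v = ι u + ι y)
    (u v u' v' : V) (huv : u ≠ v) (hnadj : ¬G.Adj u v) (hadj : G.Adj u' v')
    (hsh : u' = u ∨ u' = v) : ι u + ι v ≠ π u' v' := by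
  obtain ⟨y, hy, hval⟩ := hπ1 u' v' hadj
  rw [hval]
  rcases hsh with rfl | rfl
  · intro hEq
    have hvy : v = y := hι (add_left_cancel hEq)
    rcases hy with rfl | hAdj
    · exact huv hvy.symm
    · exact hnadj (hvy ▸ hAdj)
  · rw [add_comm (ι u) (ι u')]
    intro hEq
    have huy : u = y := hι (add_left_cancel hEq)
    rcases hy with rfl | hAdj
    · exact huv huy
    · exact hnadj (G.adj_symm (huy ▸ hAdj))

lemma lemmaA [NeZero d] (ι : V → ZMod d) (hι : Function.Injective ι)
    (hι1 : ∀ y : V, ι y + 1 ≠ 0)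
    (π : V → V → ZMod d) (τ : G.edgeSet → ZMod d)
    (hπ1 : ∀ u v, G.Adj u v → ∃ y, (y = u ∨ G.Adj u y) ∧ π u v = ι u + ι y)
    (hπ2 : ∀ u v x, G.Adj u v → G.Adj u x → v ≠ x → π u v ≠ π u x)
    (hπ3 : ∀ u v, G.Adj u v → π u v ≠ π v u)
    (hτ : ∀ (e₀ : G.edgeSet) u v, (e₀ : Sym2 V) = s(u, v) →
      τ e₀ ≠ π u v ∧ τ e₀ ≠ π v u ∧ τ e₀ ≠ ι u - 1 ∧ τ e₀ ≠ ι v - 1) :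
    ∃ f : (V ⊕ G.edgeSet) ⊕ (centralGraph G).edgeSet → Fin d,
      IsProperTotalColoring (centralGraph G) f := by
  have j := Fintype.equivFinOfCardEq (ZMod.card d)
  have key1 : ∀ x y : V ⊕ G.edgeSet, (centralGraph G).Adj x y →
      fcol G ι π τ (Sum.inl x) ≠ fcol G ι π τ (Sum.inl y) := by
    rintro (u | e₀) (v | f₁) hxy
    · intro hEq
      exact hxy.1 (hι (sub_left_inj.mp hEq))
    · obtain ⟨v', hadj, hrep⟩ := rep_of_mem G f₁ u hxy
      exact ((hτ f₁ u v' hrep).2.2.1).symm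
    · obtain ⟨w, hadj, hrep⟩ := rep_of_mem G e₀ v hxy
      exact (hτ e₀ v w hrep).2.2.1
    · exact (hxy : False).elim
  have key2 : ∀ E E' : (centralGraph G).edgeSet, E ≠ E' →
      (∃ z, z ∈ (E : Sym2 (V ⊕ G.edgeSet)) ∧ z ∈ (E' : Sym2 (V ⊕ G.edgeSet))) →
      fcol G ι π τ (Sum.inr E) ≠ fcol G ι π τ (Sum.inr E') := by
    intro E E' hne hsh
    obtain ⟨z, hz, hz'⟩ := hsh
    have hcne : (E : Sym2 (V ⊕ G.edgeSet)) ≠ (E' : Sym2 (V ⊕ G.edgeSet)) :=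
      fun h => hne (Subtype.ext h)
    rcases central_edge_cases G E with ⟨u, v, huv, hnadj, hrep⟩ | ⟨u, e₀, hu, hrep⟩ <;>
      rcases central_edge_cases G E' with ⟨u', v', huv', hnadj', hrep'⟩ | ⟨u', e₀', hu', hrep'⟩
    · -- comp-comp
      rw [fcol_comp G ι π τ E u v hrep, fcol_comp G ι π τ E' u' v' hrep']
      rw [hrep] at hz; rw [hrep'] at hz'
      rw [hrep, hrep'] at hcne
      rw [Sym2.mem_iff] at hz hz'
      apply sum_ne_of hι u v u' v' (fun h => hcne (by
        rw [Sym2.eq_iff] at h ⊢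
        rcases h with ⟨h1, h2⟩ | ⟨h1, h2⟩
        · exact Or.inl ⟨by rw [h1], by rw [h2]⟩
        · exact Or.inr ⟨by rw [h1], by rw [h2]⟩))
      rcases hz with rfl | rfl <;> rcases hz' with h | h
      · exact Or.inl (Sum.inl.inj h)
      · exact Or.inr (Or.inl (Sum.inl.inj h))
      · exact Or.inr (Or.inr (Or.inl (Sum.inl.inj h)))
      · exact Or.inr (Or.inr (Or.inr (Sum.inl.inj h)))
    · -- comp-pend
      obtain ⟨v'', hadj', hrep₀⟩ := rep_of_mem G e₀' u' hu'
      rw [fcol_comp G ι π τ E u v hrep, fcol_pend G ι π τ E' u' v'' e₀' hrep' hrep₀]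
      rw [hrep] at hz; rw [hrep'] at hz'
      rw [Sym2.mem_iff] at hz hz'
      apply comp_ne_pend G hι hπ1 u v u' v'' huv hnadj hadj'
      rcases hz with rfl | rfl <;> rcases hz' with h | h
      · exact Or.inl (Sum.inl.inj h).symm
      · exact absurd h (by simp)
      · exact Or.inr (Sum.inl.inj h).symm
      · exact absurd h (by simp)
    · -- pend-comp
      obtain ⟨v, hadj, hrep₀⟩ := rep_of_mem G e₀ u hu
      rw [fcol_comp G ι π τ E' u' v' hrep', fcol_pend G ι π τ E u v e₀ hrep hrep₀]
      rw [hrep] at hz; rw [hrep'] at hz'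
      rw [Sym2.mem_iff] at hz hz'
      apply Ne.symm
      apply comp_ne_pend G hι hπ1 u' v' u v huv' hnadj' hadj
      rcases hz with rfl | rfl <;> rcases hz' with h | h
      · exact Or.inl (Sum.inl.inj h)
      · exact Or.inr (Sum.inl.inj h)
      · exact absurd h (by simp)
      · exact absurd h (by simp)
    · -- pend-pend
      obtain ⟨v, hadj, hrep₀⟩ := rep_of_mem G e₀ u hu
      obtain ⟨v', hadj', hrep₀'⟩ := rep_of_mem G e₀' u' hu'
      rw [hrep] at hz; rw [hrep'] at hz'
      rw [Sym2.mem_iff] at hz hz'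
      rcases hz with rfl | rfl <;> rcases hz' with h | h
      · -- shared inl u = inl u'
        obtain rfl : u = u' := Sum.inl.inj h
        have hee' : e₀ ≠ e₀' := by
          intro hh
          apply hcne
          rw [hrep, hrep', hh]
        have hvv' : v ≠ v' := by
          intro hh
          apply hee'
          apply Subtype.ext
          rw [hrep₀, hrep₀', hh]
        rw [fcol_pend G ι π τ E u v e₀ hrep hrep₀,
          fcol_pend G ι π τ E' u v' e₀' hrep' hrep₀']
        exact hπ2 u v v' hadj hadj' hvv'
      · exact absurd h (by simp)
      · exact absurd h (by simp)
      · -- shared inr e₀ = inr e₀'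
        obtain rfl : e₀ = e₀' := Sum.inr.inj h
        have huu' : u ≠ u' := by
          intro hh
          apply hcne
          rw [hrep, hrep', hh]
        have hmem' : u' ∈ (e₀ : Sym2 V) := by rw [hrep₀']; exact Sym2.mem_mk_left u' v'
        have hrepc : (e₀ : Sym2 V) = s(u, u') := (Sym2.mem_and_mem_iff huu').mp ⟨hu, hmem'⟩
        have hadjc : G.Adj u u' := by
          have h2 := e₀.2
          rw [hrepc] at h2
          exact G.mem_edgeSet.mp h2
        rw [fcol_pend G ι π τ E u u' e₀ hrep hrepc,
          fcol_pend G ι π τ E' u' u e₀ hrep' (by rw [hrepc, Sym2.eq_swap])]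
        exact hπ3 u u' hadjc
  have key3 : ∀ (z : V ⊕ G.edgeSet) (E : (centralGraph G).edgeSet),
      z ∈ (E : Sym2 (V ⊕ G.edgeSet)) →
      fcol G ι π τ (Sum.inl z) ≠ fcol G ι π τ (Sum.inr E) := by
    intro z E hz
    rcases central_edge_cases G E with ⟨u, v, huv, hnadj, hrep⟩ | ⟨u, e₀, hu, hrep⟩
    · rw [fcol_comp G ι π τ E u v hrep]
      rw [hrep, Sym2.mem_iff] at hz
      rcases hz with rfl | rfl
      · show ι u - 1 ≠ ι u + ι v
        rw [sub_eq_add_neg]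
        intro hEq
        have h1 : -1 = ι v := add_left_cancel hEq
        exact hι1 v (by rw [← h1]; ring)
      · show ι v - 1 ≠ ι u + ι v
        rw [sub_eq_add_neg, add_comm (ι u) (ι v)]
        intro hEq
        have h1 : -1 = ι u := add_left_cancel hEq
        exact hι1 u (by rw [← h1]; ring)
    · obtain ⟨v, hadj, hrep₀⟩ := rep_of_mem G e₀ u hu
      rw [fcol_pend G ι π τ E u v e₀ hrep hrep₀]
      rw [hrep, Sym2.mem_iff] at hz
      rcases hz with rfl | rfl
      · obtain ⟨y, hy, hval⟩ := hπ1 u v hadj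
        rw [hval]
        show ι u - 1 ≠ ι u + ι y
        rw [sub_eq_add_neg]
        intro hEq
        have h1 : -1 = ι y := add_left_cancel hEq
        exact hι1 y (by rw [← h1]; ring)
      · exact (hτ e₀ u v hrep₀).1
  exact ⟨fun x => j (fcol G ι π τ x),
    ⟨fun u v h => fun hEq => key1 u v h (j.injective hEq),
     fun E E' h1 h2 => fun hEq => key2 E E' h1 h2 (j.injective hEq),
     fun z E h => fun hEq => key3 z E h (j.injective hEq)⟩⟩

end LemA

section Tau
variable {V : Type*} (G : SimpleGraph V) {d : ℕ}

lemma exists_tau (ι : V → ZMod d) (π : V → V → ZMod d)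
    (h : ∀ u v, G.Adj u v → ∃ c : ZMod d,
      c ≠ π u v ∧ c ≠ π v u ∧ c ≠ ι u - 1 ∧ c ≠ ι v - 1) :
    ∃ τ : G.edgeSet → ZMod d, ∀ (e₀ : G.edgeSet) u v, (e₀ : Sym2 V) = s(u, v) →
      τ e₀ ≠ π u v ∧ τ e₀ ≠ π v u ∧ τ e₀ ≠ ι u - 1 ∧ τ e₀ ≠ ι v - 1 := by
  classical
  set SS : Sym2 V → Set (ZMod d) := Sym2.lift ⟨fun u v =>
    {c | c ≠ π u v ∧ c ≠ π v u ∧ c ≠ ι u - 1 ∧ c ≠ ι v - 1}, by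
      intro a b
      ext c
      constructor <;> rintro ⟨h1, h2, h3, h4⟩ <;> exact ⟨h2, h1, h4, h3⟩⟩ with hSS
  refine ⟨fun e₀ => if hne : (SS (e₀ : Sym2 V)).Nonempty then hne.some else 0, ?_⟩
  intro e₀ u v hrep
  have hAdj : G.Adj u v := by
    have h2 := e₀.2
    rw [hrep] at h2
    exact G.mem_edgeSet.mp h2
  obtain ⟨c, hc⟩ := h u v hAdj
  have hne : (SS (e₀ : Sym2 V)).Nonempty := by
    rw [hrep]
    exact ⟨c, by rw [hSS, Sym2.lift_mk]; exact hc⟩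
  have h4 : SS ((e₀ : Sym2 V)) = {c | c ≠ π u v ∧ c ≠ π v u ∧ c ≠ ι u - 1 ∧ c ≠ ι v - 1} := by
    rw [hrep, hSS, Sym2.lift_mk]
  have hmem : hne.some ∈ {c : ZMod d | c ≠ π u v ∧ c ≠ π v u ∧ c ≠ ι u - 1 ∧ c ≠ ι v - 1} := by
    rw [← h4]; exact hne.some_mem
  simpa only [dif_pos hne, Set.mem_setOf_eq] using hmem

end Tau

lemma maxdeg_lb {V : Type*} [Fintype V] (G : SimpleGraph V) (v : V) :
    Fintype.card V - 1 ≤ maxDeg (centralGraph G) := by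
  classical
  have hBdd : BddAbove {k | ∃ w : V ⊕ G.edgeSet, k = ((centralGraph G).neighborSet w).ncard} := by
    refine ⟨Nat.card (V ⊕ G.edgeSet), ?_⟩
    rintro k ⟨w, rfl⟩
    calc ((centralGraph G).neighborSet w).ncard ≤ (Set.univ : Set (V ⊕ G.edgeSet)).ncard :=
          Set.ncard_le_ncard (Set.subset_univ _) (Set.toFinite _)
      _ = Nat.card (V ⊕ G.edgeSet) := Set.ncard_univ _
  have hmem : ((centralGraph G).neighborSet (Sum.inl v)).ncard ∈
      {k | ∃ w : V ⊕ G.edgeSet, k = ((centralGraph G).neighborSet w).ncard} :=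
    ⟨Sum.inl v, rfl⟩
  have hle := le_csSup hBdd hmem
  refine le_trans ?_ hle
  -- card V - 1 ≤ ncard of the neighbor set
  set φ : V → V ⊕ G.edgeSet := fun x =>
    if h : G.Adj v x then Sum.inr ⟨s(v, x), h⟩ else Sum.inl x with hφ
  have hmaps : ∀ x ∈ ({v}ᶜ : Set V), φ x ∈ (centralGraph G).neighborSet (Sum.inl v) := by
    intro x hx
    have hxv : x ≠ v := hx
    rw [hφ]
    by_cases hadj : G.Adj v x
    · simp only [dif_pos hadj]
      show v ∈ (⟨s(v, x), hadj⟩ : G.edgeSet).1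
      exact Sym2.mem_mk_left v x
    · simp only [dif_neg hadj]
      exact ⟨fun h => hxv h.symm, hadj⟩
  have hinj : Set.InjOn φ ({v}ᶜ : Set V) := by
    intro a _ b _ hab
    rw [hφ] at hab
    by_cases ha : G.Adj v a <;> by_cases hb : G.Adj v b
    · simp only [dif_pos ha, dif_pos hb] at hab
      have := Sum.inr.inj hab
      have h2 : (s(v, a) : Sym2 V) = s(v, b) := congrArg Subtype.val this
      exact Sym2.congr_right.mp h2
    · simp only [dif_pos ha, dif_neg hb] at hab
      exact absurd hab (by simp)
    · simp only [dif_neg ha, dif_pos hb] at hab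
      exact absurd hab (by simp)
    · simp only [dif_neg ha, dif_neg hb] at hab
      exact Sum.inl.inj hab
  have hcard := Set.ncard_le_ncard_of_injOn φ hmaps hinj (Set.toFinite _)
  refine le_trans (le_of_eq ?_) hcard
  rw [Set.compl_eq_univ_diff, Set.ncard_diff (Set.subset_univ _), Set.ncard_univ,
    Set.ncard_singleton, Nat.card_eq_fintype_card]

lemma iota_inj {V : Type*} (n d : ℕ) (hd : n < d) (k : V ≃ Fin n) :
    Function.Injective (fun v => (((k v : ℕ)) : ZMod d)) := by
  haveI : NeZero d := ⟨by omega⟩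
  intro a b hab
  simp only at hab
  have ha := ZMod.val_natCast_of_lt (lt_trans (k a).2 hd)
  have hb := ZMod.val_natCast_of_lt (lt_trans (k b).2 hd)
  have : ((k a : ℕ)) = ((k b : ℕ)) := by rw [← ha, ← hb, hab]
  exact k.injective (Fin.ext this)

lemma iota_succ_ne {V : Type*} (n d : ℕ) (hd : n < d) (k : V ≃ Fin n) :
    ∀ y : V, (((k y : ℕ)) : ZMod d) + 1 ≠ 0 := by
  haveI : NeZero d := ⟨by omega⟩
  intro y h
  have hlt : (k y : ℕ) + 1 < d := by have h5 := (k y).2; omega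
  have h2 : (((k y : ℕ) + 1 : ℕ) : ZMod d) = 0 := by push_cast; exact h
  have h3 := ZMod.val_natCast_of_lt hlt
  rw [h2, ZMod.val_zero] at h3
  omega

lemma exists_pi {V : Type*} [Fintype V] (G : SimpleGraph V) (d : ℕ) (ι : V → ZMod d)
    (hι : Function.Injective ι) :
    ∃ π : V → V → ZMod d,
      (∀ u v, G.Adj u v → ∃ y, (y = u ∨ G.Adj u y) ∧ π u v = ι u + ι y) ∧
      (∀ u v x, G.Adj u v → G.Adj u x → v ≠ x → π u v ≠ π u x) ∧
      (∀ u v, G.Adj u v → π u v ≠ π v u) := by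
  classical
  suffices H : ∀ s : Finset (V × V), (∀ p ∈ s, G.Adj p.1 p.2) →
      ∃ π : V → V → ZMod d,
        (∀ p ∈ s, ∃ y, (y = p.1 ∨ G.Adj p.1 y) ∧ π p.1 p.2 = ι p.1 + ι y) ∧
        (∀ p ∈ s, ∀ q ∈ s, p.1 = q.1 → p.2 ≠ q.2 → π p.1 p.2 ≠ π q.1 q.2) ∧
        (∀ p ∈ s, (p.2, p.1) ∈ s → π p.1 p.2 ≠ π p.2 p.1) by
    obtain ⟨π, h1, h2, h3⟩ := H (Finset.univ.filter (fun p => G.Adj p.1 p.2))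
      (fun p hp => (Finset.mem_filter.mp hp).2)
    have hmem : ∀ u v, G.Adj u v → ((u, v) : V × V) ∈
        Finset.univ.filter (fun p : V × V => G.Adj p.1 p.2) := by
      intro u v h; simp [Finset.mem_filter, h]
    exact ⟨π, fun u v h => h1 (u, v) (hmem u v h),
      fun u v x h h' hne => h2 (u, v) (hmem u v h) (u, x) (hmem u x h') rfl hne,
      fun u v h => h3 (u, v) (hmem u v h) (hmem v u h.symm)⟩
  intro s
  induction s using Finset.induction_on with
  | empty => intro _; exact ⟨fun _ _ => 0, by simp, by simp, by simp⟩
  | @insert p s hp IH =>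
    intro hadj
    obtain ⟨u, v⟩ := p
    have huv : G.Adj u v := hadj (u, v) (Finset.mem_insert_self _ _)
    have hs : ∀ p ∈ s, G.Adj p.1 p.2 := fun p hp' => hadj p (Finset.mem_insert_of_mem hp')
    obtain ⟨π, h1, h2, h3⟩ := IH hs
    set avail : Finset (ZMod d) :=
      (insert u (G.neighborFinset u)).image (fun y => ι u + ι y) with havail
    set used : Finset (ZMod d) :=
      insert (π v u) (((G.neighborFinset u).erase v).image (fun x => π u x)) with hused
    have hcav : avail.card = (G.neighborFinset u).card + 1 := by
      rw [havail, Finset.card_image_of_injective _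
        (fun a b hab => hι (by simpa using hab : ι a = ι b))]
      rw [Finset.card_insert_of_notMem (by simp)]
    have hcus : used.card ≤ (G.neighborFinset u).card := by
      have hv : v ∈ G.neighborFinset u := by simpa using huv
      calc used.card ≤ (((G.neighborFinset u).erase v).image (fun x => π u x)).card + 1 :=
            Finset.card_insert_le _ _
        _ ≤ ((G.neighborFinset u).erase v).card + 1 := by
            gcongr; exact Finset.card_image_le
        _ = (G.neighborFinset u).card - 1 + 1 := by rw [Finset.card_erase_of_mem hv]
        _ = (G.neighborFinset u).card := by
            have : 1 ≤ (G.neighborFinset u).card := Finset.card_pos.mpr ⟨v, hv⟩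
            omega
    have hnot : ¬ avail ⊆ used := fun hsub => by
      have := Finset.card_le_card hsub; omega
    obtain ⟨c, hc, hcn⟩ := Finset.not_subset.mp hnot
    obtain ⟨y₀, hy₀, hcy₀⟩ := Finset.mem_image.mp hc
    set π' : V → V → ZMod d := fun a b => if a = u ∧ b = v then c else π a b with hπ'
    have hπs : ∀ q ∈ s, π' q.1 q.2 = π q.1 q.2 := by
      intro q hq
      have : ¬(q.1 = u ∧ q.2 = v) := by
        rintro ⟨h1', h2'⟩
        apply hp
        have : q = (u, v) := Prod.ext h1' h2'
        rwa [this] at hq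
      simp [hπ', this]
    have hπuv : π' u v = c := by simp [hπ']
    refine ⟨π', ?_, ?_, ?_⟩
    · intro q hq
      rcases Finset.mem_insert.mp hq with rfl | hq'
      · refine ⟨y₀, ?_, by rw [hπuv, hcy₀]⟩
        rcases Finset.mem_insert.mp hy₀ with rfl | h
        · exact Or.inl rfl
        · exact Or.inr (by simpa using h)
      · obtain ⟨y, hy, hy2⟩ := h1 q hq'
        exact ⟨y, hy, by rw [hπs q hq', hy2]⟩
    · intro q hq r hr hqr hne
      rcases Finset.mem_insert.mp hq with rfl | hq' <;>
        rcases Finset.mem_insert.mp hr with hr0 | hr'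
      · exact absurd (congrArg Prod.snd hr0.symm) (by simpa using hne)
      · -- q = (u,v), r ∈ s
        obtain ⟨r1, r2⟩ := r
        simp only at hqr hne
        obtain rfl : u = r1 := hqr
        rw [hπuv, hπs (u, r2) hr']
        intro hEq
        apply hcn
        rw [hused]
        apply Finset.mem_insert_of_mem
        apply Finset.mem_image.mpr
        refine ⟨r2, ?_, hEq.symm⟩
        exact Finset.mem_erase.mpr ⟨fun h => hne h.symm, by
          simpa using (hs (u, r2) hr' : G.Adj u r2)⟩
      · -- r = (u,v), q ∈ s
        obtain rfl := hr0
        obtain ⟨q1, q2⟩ := q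
        simp only at hqr hne
        subst hqr
        rw [hπuv, hπs (q1, q2) hq']
        intro hEq
        apply hcn
        rw [hused]
        apply Finset.mem_insert_of_mem
        apply Finset.mem_image.mpr
        refine ⟨q2, ?_, hEq⟩
        exact Finset.mem_erase.mpr ⟨hne, by
          simpa using (hs (q1, q2) hq' : G.Adj q1 q2)⟩
      · rw [hπs q hq', hπs r hr']; exact h2 q hq' r hr' hqr hne
    · intro q hq hq2
      rcases Finset.mem_insert.mp hq with rfl | hq'
      · -- q = (u,v)
        have h2' : ((v, u) : V × V) ∈ s := by
          rcases Finset.mem_insert.mp hq2 with h | h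
          · exact absurd (congrArg Prod.fst h) huv.ne'
          · exact h
        have hvu : π' v u = π v u := hπs (v, u) h2'
        simp only at hvu ⊢
        rw [hπuv, hvu]
        intro hEq; exact hcn (hEq ▸ Finset.mem_insert_self _ _)
      · rcases Finset.mem_insert.mp hq2 with h | h
        · -- (q.2, q.1) = (u, v), so q = (v, u) ∈ s
          obtain ⟨q1, q2⟩ := q
          simp only [Prod.mk.injEq] at h
          obtain ⟨rfl, rfl⟩ := h
          have hvu : π' q1 q2 = π q1 q2 := hπs (q1, q2) hq'
          simp only at hvu ⊢
          rw [hvu, hπuv]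
          intro hEq; exact hcn (hEq.symm ▸ Finset.mem_insert_self _ _)
        · rw [hπs q hq', hπs (q.2, q.1) h]; exact h3 q hq' h


/-- The Total-Coloring Conjecture holds for the central graph of
any graph: `χ''(C(G)) ≤ Δ(C(G)) + 2`. -/
theorem stmt_10 {V : Type*} [Fintype V] (G : SimpleGraph V) :
    totalChromaticNumber (centralGraph G) ≤ maxDeg (centralGraph G) + 2 := by
  classical
  have key : ∃ f : (V ⊕ G.edgeSet) ⊕ (centralGraph G).edgeSet → Fin (Fintype.card V + 1),
      IsProperTotalColoring (centralGraph G) f := by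
    haveI : NeZero (Fintype.card V + 1) := ⟨Nat.succ_ne_zero _⟩
    by_cases hE : ∃ u v : V, G.Adj u v
    · obtain ⟨u₀, v₀, h₀⟩ := hE
      haveI : Nontrivial V := ⟨⟨u₀, v₀, h₀.ne⟩⟩
      have hn2 : 2 ≤ Fintype.card V := Fintype.one_lt_card
      rcases lt_or_ge (Fintype.card V) 4 with h4 | h4
      · rcases (by omega : Fintype.card V = 2 ∨ Fintype.card V = 3) with hc | hc
        · -- n = 2
          rw [hc]
          have k : V ≃ Fin 2 := Fintype.equivFinOfCardEq hc
          set ι : V → ZMod 3 := fun v => ((k v : ℕ) : ZMod 3) with hι0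
          have hιinj : Function.Injective ι := iota_inj 2 3 (by omega) k
          have hι1 := iota_succ_ne 2 3 (by omega) k
          set π : V → V → ZMod 3 := fun u v => ι u + ι u with hπ0
          have hπ1 : ∀ u v, G.Adj u v → ∃ y, (y = u ∨ G.Adj u y) ∧ π u v = ι u + ι y :=
            fun u v _ => ⟨u, Or.inl rfl, rfl⟩
          have hπ2 : ∀ u v x, G.Adj u v → G.Adj u x → v ≠ x → π u v ≠ π u x := by
            intro u v x h1 h2 h3
            have H : ∀ i j l : Fin 2, i ≠ j → i ≠ l → j ≠ l → False := by decide
            exact (H (k u) (k v) (k x) (fun h => h1.ne (k.injective h))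
              (fun h => h2.ne (k.injective h)) (fun h => h3 (k.injective h))).elim
          have hπ3 : ∀ u v, G.Adj u v → π u v ≠ π v u := by
            intro u v h
            have H : ∀ i j : Fin 2, i ≠ j →
                ((i : ℕ) : ZMod 3) + ((i : ℕ) : ZMod 3) ≠
                ((j : ℕ) : ZMod 3) + ((j : ℕ) : ZMod 3) := by decide
            exact H (k u) (k v) (fun hh => h.ne (k.injective hh))
          have hpoint : ∀ u v, G.Adj u v → ∃ c : ZMod 3,
              c ≠ π u v ∧ c ≠ π v u ∧ c ≠ ι u - 1 ∧ c ≠ ι v - 1 := by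
            intro u v h
            have H : ∀ i j : Fin 2, i ≠ j → ∃ c : ZMod 3,
                c ≠ ((i : ℕ) : ZMod 3) + ((i : ℕ) : ZMod 3) ∧
                c ≠ ((j : ℕ) : ZMod 3) + ((j : ℕ) : ZMod 3) ∧
                c ≠ ((i : ℕ) : ZMod 3) - 1 ∧ c ≠ ((j : ℕ) : ZMod 3) - 1 := by decide
            exact H (k u) (k v) (fun hh => h.ne (k.injective hh))
          obtain ⟨τ, hτ⟩ := exists_tau G ι π hpoint
          exact lemmaA G ι hιinj hι1 π τ hπ1 hπ2 hπ3 hτ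
        · -- n = 3
          rw [hc]
          have k₀ : V ≃ Fin 3 := Fintype.equivFinOfCardEq hc
          set k₁ := k₀.trans (Equiv.swap (k₀ u₀) 0) with hk₁
          have hk₁u : k₁ u₀ = 0 := by
            rw [hk₁]; simp [Equiv.swap_apply_left]
          set k := k₁.trans (Equiv.swap (k₁ v₀) 1) with hk
          have hkv : k v₀ = 1 := by
            rw [hk]; simp [Equiv.swap_apply_left]
          have hk₁v : k₁ v₀ ≠ 0 := fun h => h₀.ne (k₁.injective (hk₁u.trans h.symm))
          have hku : k u₀ = 0 := by
            rw [hk]; simp only [Equiv.trans_apply, hk₁u]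
            exact Equiv.swap_apply_of_ne_of_ne (Ne.symm hk₁v) (by decide)
          set ι : V → ZMod 4 := fun v => ((k v : ℕ) : ZMod 4) with hι0
          have hιinj : Function.Injective ι := iota_inj 3 4 (by omega) k
          have hι1 := iota_succ_ne 3 4 (by omega) k
          set tab : Fin 3 → Fin 3 → ZMod 4 := fun i j =>
            if i = 0 then (if j = 1 then 0 else 1)
            else if i = 1 then (if j = 0 then 1 else 2)
            else (if j = 0 then 2 else 0) with htab
          set π : V → V → ZMod 4 := fun u v => tab (k u) (k v) with hπ0
          have hπ1 : ∀ u v, G.Adj u v → ∃ y, (y = u ∨ G.Adj u y) ∧ π u v = ι u + ι y := by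
            intro u v hadj
            have hne : k u ≠ k v := fun h => hadj.ne (k.injective h)
            have H : ∀ i j : Fin 3, i ≠ j →
                (tab i j = ((i : ℕ) : ZMod 4) + ((i : ℕ) : ZMod 4)) ∨
                (tab i j = ((i : ℕ) : ZMod 4) + ((j : ℕ) : ZMod 4)) ∨
                (i = 0 ∧ j = 2 ∧ tab i j = ((i : ℕ) : ZMod 4) + 1) := by decide
            rcases H (k u) (k v) hne with h | h | ⟨hi, hj, h⟩
            · exact ⟨u, Or.inl rfl, h⟩
            · exact ⟨v, Or.inr hadj, h⟩
            · refine ⟨v₀, Or.inr ?_, ?_⟩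
              · have hu : u = u₀ := k.injective (by rw [hi, hku])
                rw [hu]; exact h₀
              · show tab (k u) (k v) = ((k u : ℕ) : ZMod 4) + ((k v₀ : ℕ) : ZMod 4)
                rw [h, hkv]
                norm_num
          have hπ2 : ∀ u v x, G.Adj u v → G.Adj u x → v ≠ x → π u v ≠ π u x := by
            intro u v x h1 h2 h3
            have H : ∀ i j l : Fin 3, i ≠ j → i ≠ l → j ≠ l → tab i j ≠ tab i l := by decide
            exact H (k u) (k v) (k x) (fun h => h1.ne (k.injective h))
              (fun h => h2.ne (k.injective h)) (fun h => h3 (k.injective h))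
          have hπ3 : ∀ u v, G.Adj u v → π u v ≠ π v u := by
            intro u v h
            have H : ∀ i j : Fin 3, i ≠ j → tab i j ≠ tab j i := by decide
            exact H (k u) (k v) (fun hh => h.ne (k.injective hh))
          have hpoint : ∀ u v, G.Adj u v → ∃ c : ZMod 4,
              c ≠ π u v ∧ c ≠ π v u ∧ c ≠ ι u - 1 ∧ c ≠ ι v - 1 := by
            intro u v h
            have H : ∀ i j : Fin 3, i ≠ j → ∃ c : ZMod 4, c ≠ tab i j ∧ c ≠ tab j i ∧
                c ≠ ((i : ℕ) : ZMod 4) - 1 ∧ c ≠ ((j : ℕ) : ZMod 4) - 1 := by decide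
            exact H (k u) (k v) (fun hh => h.ne (k.injective hh))
          obtain ⟨τ, hτ⟩ := exists_tau G ι π hpoint
          exact lemmaA G ι hιinj hι1 π τ hπ1 hπ2 hπ3 hτ
      · -- n ≥ 4
        have k := Fintype.equivFin V
        set ι : V → ZMod (Fintype.card V + 1) := fun v => ((k v : ℕ) : ZMod _) with hι0
        have hιinj : Function.Injective ι := iota_inj _ _ (Nat.lt_succ_self _) k
        have hι1 := iota_succ_ne _ _ (Nat.lt_succ_self _) k
        obtain ⟨π, hπ1, hπ2, hπ3⟩ := exists_pi G (Fintype.card V + 1) ι hιinj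
        have hpoint : ∀ u v, G.Adj u v → ∃ c : ZMod (Fintype.card V + 1),
            c ≠ π u v ∧ c ≠ π v u ∧ c ≠ ι u - 1 ∧ c ≠ ι v - 1 := by
          intro u v _
          by_contra hcon
          push_neg at hcon
          have hsub : (Finset.univ : Finset (ZMod (Fintype.card V + 1))) ⊆
              {π u v, π v u, ι u - 1, ι v - 1} := by
            intro c _
            simp only [Finset.mem_insert, Finset.mem_singleton]
            by_contra hcc
            push_neg at hcc
            exact hcc.2.2.2 (hcon c hcc.1 hcc.2.1 hcc.2.2.1)
          have h5 := Finset.card_le_card hsub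
          rw [Finset.card_univ, ZMod.card] at h5
          have a1 := Finset.card_insert_le (π u v)
            ({π v u, ι u - 1, ι v - 1} : Finset (ZMod (Fintype.card V + 1)))
          have a2 := Finset.card_insert_le (π v u)
            ({ι u - 1, ι v - 1} : Finset (ZMod (Fintype.card V + 1)))
          have a3 := Finset.card_insert_le (ι u - 1)
            ({ι v - 1} : Finset (ZMod (Fintype.card V + 1)))
          have a4 : ({ι v - 1} : Finset (ZMod (Fintype.card V + 1))).card = 1 :=
            Finset.card_singleton _
          omega
        obtain ⟨τ, hτ⟩ := exists_tau G ι π hpoint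
        exact lemmaA G ι hιinj hι1 π τ hπ1 hπ2 hπ3 hτ
    · -- no edges
      have k := Fintype.equivFin V
      set ι : V → ZMod (Fintype.card V + 1) := fun v => ((k v : ℕ) : ZMod _) with hι0
      have hιinj : Function.Injective ι := iota_inj _ _ (Nat.lt_succ_self _) k
      have hι1 := iota_succ_ne _ _ (Nat.lt_succ_self _) k
      obtain ⟨π, hπ1, hπ2, hπ3⟩ := exists_pi G (Fintype.card V + 1) ι hιinj
      have hpoint : ∀ u v, G.Adj u v → ∃ c : ZMod (Fintype.card V + 1),
          c ≠ π u v ∧ c ≠ π v u ∧ c ≠ ι u - 1 ∧ c ≠ ι v - 1 :=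
        fun u v h => absurd ⟨u, v, h⟩ hE
      obtain ⟨τ, hτ⟩ := exists_tau G ι π hpoint
      exact lemmaA G ι hιinj hι1 π τ hπ1 hπ2 hπ3 hτ
  have h1 : totalChromaticNumber (centralGraph G) ≤ Fintype.card V + 1 := Nat.sInf_le key
  have h2 : Fintype.card V ≤ maxDeg (centralGraph G) + 1 := by
    rcases isEmpty_or_nonempty V with hVe | hVn
    · have : Fintype.card V = 0 := Fintype.card_eq_zero
      omega
    · obtain ⟨v⟩ := hVn
      have h3 := maxdeg_lb G v
      haveI : Nonempty V := ⟨v⟩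
      have hpos : 1 ≤ Fintype.card V := Fintype.card_pos
      omega
  omega
end

section
/- Let G be a connected regular simple graph of odd order n ≥ 5. Then the total distinguishing chromatic number of its central graph satisfies χ''_D(C(G)) = Δ(C(G)) + 1 = n; consequently C(G) is a Type 1 graph, i.e., χ''(C(G)) = Δ(C(G)) + 1. -/
open SimpleGraph

set_option linter.unusedVariables false
set_option linter.unusedSectionVars false
namespace Stmt12Aux
open SimpleGraph Set

variable {V : Type*} [Fintype V] {G : SimpleGraph V}

lemma cg_adj_inl_inl {u v : V} :
    (centralGraph G).Adj (Sum.inl u) (Sum.inl v) ↔ u ≠ v ∧ ¬ G.Adj u v := Iff.rfl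

lemma cg_adj_inl_inr {u : V} {e : G.edgeSet} :
    (centralGraph G).Adj (Sum.inl u) (Sum.inr e) ↔ u ∈ (e : Sym2 V) := Iff.rfl

lemma cg_adj_inr_inl {u : V} {e : G.edgeSet} :
    (centralGraph G).Adj (Sum.inr e) (Sum.inl u) ↔ u ∈ (e : Sym2 V) := Iff.rfl

lemma cg_adj_inr_inr {e f : G.edgeSet} :
    ¬ (centralGraph G).Adj (Sum.inr e) (Sum.inr f) := fun h => h

/-- every edge of `G` (as subtype) has two distinct adjacent endpoints -/
lemma edge_repr (e : G.edgeSet) : ∃ a b : V, (e : Sym2 V) = s(a, b) ∧ G.Adj a b := by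
  obtain ⟨z, hz⟩ := e
  induction z with
  | _ a b => exact ⟨a, b, rfl, hz⟩

/-- the neighbor set of an original vertex in the central graph -/
lemma cg_nbr_inl (u : V) :
    (centralGraph G).neighborSet (Sum.inl u) =
      (Sum.inl '' {v | u ≠ v ∧ ¬ G.Adj u v}) ∪
      (Sum.inr '' {e : G.edgeSet | u ∈ (e : Sym2 V)}) := by
  ext x
  cases x with
  | inl v => simp [mem_neighborSet, cg_adj_inl_inl]
  | inr e => simp [mem_neighborSet, cg_adj_inl_inr]

lemma ncard_nbr_edges (u : V) :
    {e : G.edgeSet | u ∈ (e : Sym2 V)}.ncard = (G.neighborSet u).ncard := by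
  rw [← Nat.card_coe_set_eq, ← Nat.card_coe_set_eq]
  apply Nat.card_congr
  have toN : ∀ p : {e : G.edgeSet | u ∈ (e : Sym2 V)}, Sym2.Mem.other p.2 ∈ G.neighborSet u := by
    rintro ⟨⟨e, he⟩, hu⟩
    have hsp := Sym2.other_spec hu
    rw [mem_neighborSet, ← SimpleGraph.mem_edgeSet, hsp]
    exact he
  refine ⟨fun p => ⟨Sym2.Mem.other p.2, toN p⟩,
    fun v => ⟨⟨s(u, (v : V)), (G.mem_edgeSet).mpr v.2⟩, Sym2.mem_mk_left _ _⟩, ?_, ?_⟩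
  · rintro ⟨⟨e, he⟩, hu⟩
    apply Subtype.ext; apply Subtype.ext
    show (s(u, _) : Sym2 V) = e
    exact Sym2.other_spec hu
  · intro v
    apply Subtype.ext
    show Sym2.Mem.other _ = (v : V)
    exact Sym2.congr_right.mp (Sym2.other_spec _)

lemma nonadj_set_eq (u : V) :
    {v : V | u ≠ v ∧ ¬ G.Adj u v} = (insert u (G.neighborSet u))ᶜ := by
  ext v
  simp [mem_neighborSet, not_or, eq_comm]

lemma ncard_cg_nbr_inl (u : V) :
    ((centralGraph G).neighborSet (Sum.inl u)).ncard = Fintype.card V - 1 := by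
  classical
  have hfin : ∀ s : Set (V ⊕ G.edgeSet), s.Finite := fun s => s.toFinite
  rw [cg_nbr_inl, Set.ncard_union_eq (by
      simp [Set.disjoint_left]) (hfin _) (hfin _),
    Set.ncard_image_of_injective _ Sum.inl_injective,
    Set.ncard_image_of_injective _ Sum.inr_injective,
    ncard_nbr_edges, nonadj_set_eq]
  have hins : (insert u (G.neighborSet u)).ncard = (G.neighborSet u).ncard + 1 :=
    Set.ncard_insert_of_notMem (fun h => G.loopless.irrefl u h) (Set.toFinite _)
  have hcompl : (insert u (G.neighborSet u))ᶜ.ncard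
      = Fintype.card V - ((G.neighborSet u).ncard + 1) := by
    have := Set.ncard_add_ncard_compl (insert u (G.neighborSet u))
    rw [hins, Nat.card_eq_fintype_card] at this
    omega
  have hle : (G.neighborSet u).ncard + 1 ≤ Fintype.card V := by
    rw [← hins]
    have := Set.ncard_le_ncard (Set.subset_univ (insert u (G.neighborSet u))) (Set.toFinite _)
    rwa [Set.ncard_univ, Nat.card_eq_fintype_card] at this
  rw [hcompl]
  omega

lemma cg_nbr_inr (e : G.edgeSet) {a b : V} (hab : (e : Sym2 V) = s(a, b)) :
    (centralGraph G).neighborSet (Sum.inr e) = {Sum.inl a, Sum.inl b} := by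
  ext x
  cases x with
  | inl v =>
      simp [mem_neighborSet, cg_adj_inr_inl, hab, Sym2.mem_iff]
  | inr f => simp [mem_neighborSet, cg_adj_inr_inr]

lemma ncard_cg_nbr_inr (e : G.edgeSet) :
    ((centralGraph G).neighborSet (Sum.inr e)).ncard = 2 := by
  obtain ⟨a, b, hab, hadj⟩ := edge_repr e
  rw [cg_nbr_inr e hab]
  rw [Set.ncard_pair (by simpa using hadj.ne)]

lemma maxDeg_cg (hn : 5 ≤ Fintype.card V) :
    maxDeg (centralGraph G) = Fintype.card V - 1 := by
  have hne : Nonempty V := by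
    rw [← Fintype.card_pos_iff]; omega
  obtain ⟨u⟩ := hne
  have hmem : (Fintype.card V - 1) ∈
      {k | ∃ v : V ⊕ G.edgeSet, k = ((centralGraph G).neighborSet v).ncard} :=
    ⟨Sum.inl u, (ncard_cg_nbr_inl u).symm⟩
  have hub : ∀ k ∈ {k | ∃ v : V ⊕ G.edgeSet, k = ((centralGraph G).neighborSet v).ncard},
      k ≤ Fintype.card V - 1 := by
    rintro k ⟨x, rfl⟩
    cases x with
    | inl v => rw [ncard_cg_nbr_inl]
    | inr e => rw [ncard_cg_nbr_inr]; omega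
  exact le_antisymm (csSup_le ⟨_, hmem⟩ hub) (le_csSup ⟨_, hub⟩ hmem)

end Stmt12Aux
namespace Stmt12Aux
open SimpleGraph Set

variable {V : Type*} [Fintype V] {G : SimpleGraph V}

lemma lower_bound (hn : 5 ≤ Fintype.card V) {d : ℕ}
    (f : (V ⊕ G.edgeSet) ⊕ (centralGraph G).edgeSet → Fin d)
    (hf : IsProperTotalColoring (centralGraph G) f) : Fintype.card V ≤ d := by
  classical
  obtain ⟨u0⟩ : Nonempty V := by rw [← Fintype.card_pos_iff]; omega
  have hedge : ∀ w : ↥((centralGraph G).neighborSet (Sum.inl u0)),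
      s(Sum.inl u0, (w : V ⊕ G.edgeSet)) ∈ (centralGraph G).edgeSet :=
    fun w => ((centralGraph G).mem_edgeSet).mpr w.2
  let Ψ : Option ↥((centralGraph G).neighborSet (Sum.inl u0)) → Fin d := fun o =>
    Option.elim o (f (Sum.inl (Sum.inl u0)))
      (fun w => f (Sum.inr ⟨s(Sum.inl u0, (w : V ⊕ G.edgeSet)), hedge w⟩))
  have hΨ : Function.Injective Ψ := by
    rintro (_ | w) (_ | w') h
    · rfl
    · exfalso
      exact hf.2.2 (Sum.inl u0) ⟨s(Sum.inl u0, (w' : V ⊕ G.edgeSet)), hedge w'⟩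
        (Sym2.mem_mk_left _ _) h
    · exfalso
      exact hf.2.2 (Sum.inl u0) ⟨s(Sum.inl u0, (w : V ⊕ G.edgeSet)), hedge w⟩
        (Sym2.mem_mk_left _ _) h.symm
    · congr 1
      by_contra hne
      have hval : (w : V ⊕ G.edgeSet) ≠ (w' : V ⊕ G.edgeSet) := by
        intro hv; exact hne (Subtype.ext hv)
      refine hf.2.1 ⟨s(Sum.inl u0, (w : V ⊕ G.edgeSet)), hedge w⟩
        ⟨s(Sum.inl u0, (w' : V ⊕ G.edgeSet)), hedge w'⟩ ?_
        ⟨Sum.inl u0, Sym2.mem_mk_left _ _, Sym2.mem_mk_left _ _⟩ h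
      intro hsub
      have := congrArg Subtype.val hsub
      simp only at this
      exact hval (Sym2.congr_right.mp this)
  have hcard := Fintype.card_le_of_injective Ψ hΨ
  rw [Fintype.card_option, Fintype.card_fin] at hcard
  have hNcard : Fintype.card ↥((centralGraph G).neighborSet (Sum.inl u0))
      = Fintype.card V - 1 := by
    rw [← Nat.card_eq_fintype_card, Nat.card_coe_set_eq, ncard_cg_nbr_inl]
  omega

end Stmt12Aux
namespace Stmt12Aux
open SimpleGraph Set

variable {V : Type*} [Fintype V] {G : SimpleGraph V}

/-- The data needed to build a proper total coloring of the central graph. -/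
structure Good (G : SimpleGraph V) (n : ℕ) where
  κ : V → ZMod n
  A : V → V → V
  inj : Function.Injective κ
  mem : ∀ {u v}, G.Adj u v → G.Adj u (A u v)
  injOn : ∀ {u v w}, G.Adj u v → G.Adj u w → A u v = A u w → v = w
  cond : ∀ {u v}, G.Adj u v → κ u + κ (A u v) ≠ κ v + κ (A v u)

open Classical in
noncomputable def otherEnd (G : SimpleGraph V) (e : G.edgeSet) (u : V) : V :=
  if h : u ∈ (e : Sym2 V) then Sym2.Mem.other h else u

lemma otherEnd_spec {e : G.edgeSet} {u : V} (h : u ∈ (e : Sym2 V)) :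
    s(u, otherEnd G e u) = (e : Sym2 V) := by
  rw [otherEnd, dif_pos h]
  exact Sym2.other_spec h

lemma adj_otherEnd {e : G.edgeSet} {u : V} (h : u ∈ (e : Sym2 V)) :
    G.Adj u (otherEnd G e u) := by
  rw [← SimpleGraph.mem_edgeSet, otherEnd_spec h]; exact e.2

lemma otherEnd_eq {e : G.edgeSet} {u v : V} (h : u ∈ (e : Sym2 V)) (hv : v ∈ (e : Sym2 V))
    (hne : v ≠ u) : otherEnd G e u = v := by
  have hsp := otherEnd_spec h
  rw [← hsp] at hv
  rcases Sym2.mem_iff.mp hv with h1 | h1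
  · exact absurd h1 hne
  · exact h1.symm

variable {n : ℕ}

noncomputable def wbad (g : Good G n) : G.edgeSet → Finset (ZMod n) := fun e =>
  Sym2.lift ⟨fun u v => ({g.κ u + g.κ u, g.κ v + g.κ v,
      g.κ u + g.κ (g.A u v), g.κ v + g.κ (g.A v u)} : Finset (ZMod n)), by
    intro u v
    ext x
    simp only [Finset.mem_insert, Finset.mem_singleton]
    tauto⟩ (e : Sym2 V)

lemma wbad_eq (g : Good G n) {e : G.edgeSet} {u v : V} (h : (e : Sym2 V) = s(u, v)) :
    wbad g e = {g.κ u + g.κ u, g.κ v + g.κ v,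
      g.κ u + g.κ (g.A u v), g.κ v + g.κ (g.A v u)} := by
  rw [wbad, h, Sym2.lift_mk]

lemma wbad_card (g : Good G n) (e : G.edgeSet) : (wbad g e).card ≤ 4 := by
  obtain ⟨a, b, hab, _⟩ := edge_repr e
  rw [wbad_eq g hab]
  refine le_trans (Finset.card_insert_le _ _) ?_
  refine Nat.succ_le_succ ?_
  refine le_trans (Finset.card_insert_le _ _) ?_
  refine Nat.succ_le_succ ?_
  refine le_trans (Finset.card_insert_le _ _) ?_
  exact Nat.succ_le_succ (Finset.card_singleton _).le

lemma wgood_nonempty (g : Good G n) [NeZero n] (hn : 5 ≤ n) (e : G.edgeSet) :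
    ((Finset.univ : Finset (ZMod n)) \ wbad g e).Nonempty := by
  rw [Finset.sdiff_nonempty]
  intro hsub
  have h1 : (Finset.univ : Finset (ZMod n)).card ≤ (wbad g e).card :=
    Finset.card_le_card hsub
  rw [Finset.card_univ, ZMod.card] at h1
  have := wbad_card g e
  omega

noncomputable def wcol (g : Good G n) [NeZero n] (hn : 5 ≤ n) : G.edgeSet → ZMod n := fun e =>
  (wgood_nonempty g hn e).choose

lemma wcol_not_bad (g : Good G n) [NeZero n] (hn : 5 ≤ n) (e : G.edgeSet) :
    wcol g hn e ∉ wbad g e := by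
  have := (wgood_nonempty g hn e).choose_spec
  rw [Finset.mem_sdiff] at this
  exact this.2

noncomputable def ecol (g : Good G n) : Sym2 (V ⊕ G.edgeSet) → ZMod n :=
  Sym2.lift ⟨fun x y =>
    match x, y with
    | Sum.inl u, Sum.inl v => g.κ u + g.κ v
    | Sum.inl u, Sum.inr e => g.κ u + g.κ (g.A u (otherEnd G e u))
    | Sum.inr e, Sum.inl u => g.κ u + g.κ (g.A u (otherEnd G e u))
    | Sum.inr _, Sum.inr _ => 0, by
    rintro (u | e) (v | f)
    · exact add_comm _ _
    · rfl
    · rfl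
    · rfl⟩

lemma ecol_inl_inl (g : Good G n) (u v : V) :
    ecol g s(Sum.inl u, Sum.inl v) = g.κ u + g.κ v := by
  rw [ecol, Sym2.lift_mk]

lemma ecol_inl_inr (g : Good G n) (u : V) (e : G.edgeSet) :
    ecol g s(Sum.inl u, Sum.inr e) = g.κ u + g.κ (g.A u (otherEnd G e u)) := by
  rw [ecol, Sym2.lift_mk]

/-- shape of edges of the central graph -/
lemma cg_edge_shape (ε : (centralGraph G).edgeSet) :
    (∃ u v, (ε : Sym2 (V ⊕ G.edgeSet)) = s(Sum.inl u, Sum.inl v) ∧ u ≠ v ∧ ¬ G.Adj u v) ∨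
    (∃ u e, (ε : Sym2 (V ⊕ G.edgeSet)) = s(Sum.inl u, Sum.inr e) ∧ u ∈ (e : Sym2 V)) := by
  obtain ⟨z, hz⟩ := ε
  induction z with
  | _ x y =>
    cases x with
    | inl u =>
      cases y with
      | inl v => exact Or.inl ⟨u, v, rfl, hz⟩
      | inr e => exact Or.inr ⟨u, e, rfl, hz⟩
    | inr e =>
      cases y with
      | inl u => exact Or.inr ⟨u, e, Sym2.eq_swap, hz⟩
      | inr f => exact absurd hz (fun h => h)

end Stmt12Aux
namespace Stmt12Aux
open SimpleGraph Set

variable {V : Type*} [Fintype V] {G : SimpleGraph V} {n : ℕ}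

lemma aux_XY (g : Good G n) {u v u' : V} {e : G.edgeSet} (hnadj : ¬ G.Adj u v)
    (huv : u ≠ v) (hu' : u' ∈ (e : Sym2 V)) (hcase : u' = u ∨ u' = v) :
    g.κ u + g.κ v ≠ g.κ u' + g.κ (g.A u' (otherEnd G e u')) := by
  have hw : G.Adj u' (otherEnd G e u') := adj_otherEnd hu'
  have hAw : G.Adj u' (g.A u' (otherEnd G e u')) := g.mem hw
  rcases hcase with rfl | rfl
  · intro heq
    have := g.inj (add_left_cancel heq)
    rw [← this] at hAw
    exact hnadj hAw
  · intro heq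
    rw [add_comm (g.κ u) (g.κ u')] at heq
    have := g.inj (add_left_cancel heq)
    rw [← this] at hAw
    exact hnadj hAw.symm

lemma ecol_ne (g : Good G n) (ε ε' : (centralGraph G).edgeSet) (hne : ε ≠ ε')
    (hsh : ∃ x, x ∈ (ε : Sym2 (V ⊕ G.edgeSet)) ∧ x ∈ (ε' : Sym2 (V ⊕ G.edgeSet))) :
    ecol g ↑ε ≠ ecol g ↑ε' := by
  have hneS : (ε : Sym2 (V ⊕ G.edgeSet)) ≠ (ε' : Sym2 (V ⊕ G.edgeSet)) :=
    fun h => hne (Subtype.ext h)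
  obtain ⟨x, hx1, hx2⟩ := hsh
  rcases cg_edge_shape ε with ⟨u, v, hε, huv, hnadj⟩ | ⟨u, e, hε, hue⟩ <;>
    rcases cg_edge_shape ε' with ⟨u', v', hε', huv', hnadj'⟩ | ⟨u', e', hε', hue'⟩ <;>
    rw [hε] at hx1 hneS ⊢ <;> rw [hε'] at hx2 hneS ⊢
  · -- XX
    rw [ecol_inl_inl, ecol_inl_inl]
    intro heq
    rcases Sym2.mem_iff.mp hx1 with rfl | rfl <;> rcases Sym2.mem_iff.mp hx2 with h2 | h2
    · -- x = inl u = inl u'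
      obtain rfl : u = u' := Sum.inl_injective h2
      have := g.inj (add_left_cancel heq)
      exact hneS (by rw [this])
    · -- x = inl u = inl v'
      obtain rfl : u = v' := Sum.inl_injective h2
      rw [add_comm (g.κ u') (g.κ u)] at heq
      have := g.inj (add_left_cancel heq)
      rw [← this] at hneS
      exact hneS (Sym2.eq_swap)
    · -- x = inl v = inl u'
      obtain rfl : v = u' := Sum.inl_injective h2
      rw [add_comm (g.κ u) (g.κ v)] at heq
      have := g.inj (add_left_cancel heq)
      rw [← this] at hneS
      exact hneS (Sym2.eq_swap)
    · -- x = inl v = inl v'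
      obtain rfl : v = v' := Sum.inl_injective h2
      rw [add_comm (g.κ u) (g.κ v), add_comm (g.κ u') (g.κ v)] at heq
      have := g.inj (add_left_cancel heq)
      exact hneS (by rw [this])
  · -- XY
    rw [ecol_inl_inl, ecol_inl_inr]
    have hcase : u' = u ∨ u' = v := by
      rcases Sym2.mem_iff.mp hx2 with h2 | h2
      · subst h2
        rcases Sym2.mem_iff.mp hx1 with h1 | h1
        · exact Or.inl (Sum.inl_injective h1)
        · exact Or.inr (Sum.inl_injective h1)
      · subst h2
        rcases Sym2.mem_iff.mp hx1 with h1 | h1 <;> exact absurd h1 (by simp)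
    exact aux_XY g hnadj huv hue' hcase
  · -- YX
    rw [ecol_inl_inr, ecol_inl_inl]
    have hcase : u = u' ∨ u = v' := by
      rcases Sym2.mem_iff.mp hx1 with h1 | h1
      · subst h1
        rcases Sym2.mem_iff.mp hx2 with h2 | h2
        · exact Or.inl (Sum.inl_injective h2)
        · exact Or.inr (Sum.inl_injective h2)
      · subst h1
        rcases Sym2.mem_iff.mp hx2 with h2 | h2 <;> exact absurd h2 (by simp)
    exact (aux_XY g hnadj' huv' hue (by tauto)).symm
  · -- YY
    rw [ecol_inl_inr, ecol_inl_inr]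
    rcases Sym2.mem_iff.mp hx1 with rfl | rfl <;> rcases Sym2.mem_iff.mp hx2 with h2 | h2
    · -- u = u'
      obtain rfl : u = u' := Sum.inl_injective h2
      have hee : e ≠ e' := by
        intro h; subst h; exact hneS rfl
      have hww : otherEnd G e u ≠ otherEnd G e' u := by
        intro h
        apply hee
        apply Subtype.ext
        rw [← otherEnd_spec hue, ← otherEnd_spec hue', h]
      intro heq
      have := g.injOn (v := otherEnd G e u) (adj_otherEnd hue) (adj_otherEnd hue')
        (g.inj (add_left_cancel heq))
      exact hww this
    · exact absurd h2 (by simp)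
    · exact absurd h2 (by simp)
    · -- inr e = inr e'
      obtain rfl : e = e' := Sum.inr_injective h2
      have huu : u ≠ u' := by
        intro h; subst h; exact hneS rfl
      have h1 : otherEnd G e u = u' := otherEnd_eq hue hue' (Ne.symm huu)
      have h2' : otherEnd G e u' = u := otherEnd_eq hue' hue huu
      rw [h1, h2']
      have hadj : G.Adj u u' := by
        have := adj_otherEnd hue
        rwa [h1] at this
      exact g.cond hadj

end Stmt12Aux
namespace Stmt12Aux
open SimpleGraph Set

variable {V : Type*} [Fintype V] {G : SimpleGraph V}

lemma exists_coloring (hn : 5 ≤ Fintype.card V) (hodd : Odd (Fintype.card V))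
    (g : Good G (Fintype.card V)) :
    ∃ f : (V ⊕ G.edgeSet) ⊕ (centralGraph G).edgeSet → Fin (Fintype.card V),
      IsProperTotalColoring (centralGraph G) f ∧
      (∀ u u' : V, f (Sum.inl (Sum.inl u)) = f (Sum.inl (Sum.inl u')) → u = u') := by
  haveI : NeZero (Fintype.card V) := ⟨by omega⟩
  have hu2 : IsUnit (2 : ZMod (Fintype.card V)) :=
    (ZMod.isUnit_iff_coprime 2 _).mpr (Nat.coprime_two_left.mpr hodd)
  let χ : ZMod (Fintype.card V) ≃ Fin (Fintype.card V) :=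
    Fintype.equivFinOfCardEq (ZMod.card _)
  let F : (V ⊕ G.edgeSet) ⊕ (centralGraph G).edgeSet → ZMod (Fintype.card V) := fun x =>
    match x with
    | Sum.inl (Sum.inl u) => g.κ u + g.κ u
    | Sum.inl (Sum.inr e) => wcol g hn e
    | Sum.inr ε => ecol g (ε : Sym2 (V ⊕ G.edgeSet))
  have hvert : ∀ u u' : V, χ (F (Sum.inl (Sum.inl u))) = χ (F (Sum.inl (Sum.inl u'))) →
      u = u' := by
    intro u u' h
    have h2 : g.κ u + g.κ u = g.κ u' + g.κ u' := χ.injective h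
    rw [← two_mul, ← two_mul] at h2
    exact g.inj (hu2.mul_left_cancel h2)
  refine ⟨fun x => χ (F x), ⟨?_, ?_, ?_⟩, hvert⟩
  · rintro (u | e) (v | e') hadj heq
    · exact (hadj.1 : u ≠ v) (hvert u v heq)
    · have h2 : g.κ u + g.κ u = wcol g hn e' := χ.injective heq
      apply wcol_not_bad g hn e'
      rw [wbad_eq g (otherEnd_spec (hadj : u ∈ (e' : Sym2 V))).symm, ← h2]
      exact Finset.mem_insert_self _ _
    · have h2 : g.κ v + g.κ v = wcol g hn e := (χ.injective heq).symm
      apply wcol_not_bad g hn e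
      rw [wbad_eq g (otherEnd_spec (hadj : v ∈ (e : Sym2 V))).symm, ← h2]
      exact Finset.mem_insert_self _ _
    · exact hadj
  · intro ε ε' hne hsh heq
    exact ecol_ne g ε ε' hne hsh (χ.injective heq)
  · intro x ε hmem heq
    have hF : F (Sum.inl x) = F (Sum.inr ε) := χ.injective heq
    rcases cg_edge_shape ε with ⟨u, v, hε, huv, hnadj⟩ | ⟨u, e, hε, hue⟩
    · rw [hε] at hmem
      rcases Sym2.mem_iff.mp hmem with rfl | rfl
      · have h2 : g.κ u + g.κ u = ecol g ↑ε := hF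
        rw [hε, ecol_inl_inl] at h2
        exact huv (g.inj (add_left_cancel h2))
      · have h2 : g.κ v + g.κ v = ecol g ↑ε := hF
        rw [hε, ecol_inl_inl, add_comm (g.κ u) (g.κ v)] at h2
        exact huv (g.inj (add_left_cancel h2)).symm
    · rw [hε] at hmem
      rcases Sym2.mem_iff.mp hmem with rfl | rfl
      · have h2 : g.κ u + g.κ u = ecol g ↑ε := hF
        rw [hε, ecol_inl_inr] at h2
        have h3 := g.inj (add_left_cancel h2)
        have h4 := g.mem (adj_otherEnd hue)
        rw [← h3] at h4
        exact G.loopless.irrefl u h4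
      · have h2 : wcol g hn e = ecol g ↑ε := hF
        apply wcol_not_bad g hn e
        rw [hε, ecol_inl_inr] at h2
        rw [wbad_eq g (otherEnd_spec hue).symm, h2]
        exact Finset.mem_insert_of_mem (Finset.mem_insert_of_mem (Finset.mem_insert_self _ _))
  
lemma coloring_distinguishing (hn : 5 ≤ Fintype.card V) {d : ℕ}
    (f : (V ⊕ G.edgeSet) ⊕ (centralGraph G).edgeSet → Fin d)
    (hvert : ∀ u u' : V, f (Sum.inl (Sum.inl u)) = f (Sum.inl (Sum.inl u')) → u = u')
    (φ : centralGraph G ≃g centralGraph G)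
    (hp : PreservesTotalColoring (centralGraph G) f φ) : ∀ x, φ x = x := by
  have hdeg : ∀ x, ((centralGraph G).neighborSet (φ x)).ncard
      = ((centralGraph G).neighborSet x).ncard := by
    intro x
    rw [← Nat.card_coe_set_eq, ← Nat.card_coe_set_eq]
    exact (Nat.card_congr (φ.mapNeighborSet x)).symm
  have hfix : ∀ u : V, φ (Sum.inl u) = Sum.inl u := by
    intro u
    cases hφ : φ (Sum.inl u) with
    | inl u' =>
      have h1 := hp.1 (Sum.inl u)
      rw [hφ] at h1
      rw [hvert u' u h1]
    | inr e =>
      exfalso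
      have := hdeg (Sum.inl u)
      rw [hφ, ncard_cg_nbr_inr, ncard_cg_nbr_inl] at this
      omega
  intro x
  cases x with
  | inl u => exact hfix u
  | inr e =>
    obtain ⟨a, b, hab, hadj⟩ := edge_repr e
    cases hφ : φ (Sum.inr e) with
    | inl w =>
      exfalso
      have := hdeg (Sum.inr e)
      rw [hφ, ncard_cg_nbr_inl, ncard_cg_nbr_inr] at this
      omega
    | inr e' =>
      congr 1
      apply Subtype.ext
      have hma : ((centralGraph G).Adj (Sum.inr e) (Sum.inl a)) := by
        rw [cg_adj_inr_inl, hab]; exact Sym2.mem_mk_left _ _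
      have hmb : ((centralGraph G).Adj (Sum.inr e) (Sum.inl b)) := by
        rw [cg_adj_inr_inl, hab]; exact Sym2.mem_mk_right _ _
      have ha' : a ∈ (e' : Sym2 V) := by
        have h2 := φ.map_adj_iff.mpr hma
        rw [hφ, hfix a] at h2
        exact h2
      have hb' : b ∈ (e' : Sym2 V) := by
        have h2 := φ.map_adj_iff.mpr hmb
        rw [hφ, hfix b] at h2
        exact h2
      have hne : a ≠ b := hadj.ne
      rw [(Sym2.mem_and_mem_iff hne).mp ⟨ha', hb'⟩, hab]

end Stmt12Aux
namespace Stmt12Aux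
open SimpleGraph Set

variable {V : Type*} [Fintype V] {G : SimpleGraph V}

lemma ncard_nbr_eq_degree [DecidableRel G.Adj] (u : V) :
    (G.neighborSet u).ncard = G.degree u := by
  rw [← Nat.card_coe_set_eq, Nat.card_eq_fintype_card, card_neighborSet_eq_degree]

lemma endpoints_filter (e : G.edgeSet) [DecidableEq V] :
    ∀ {a b : V}, (e : Sym2 V) = s(a, b) →
      (Finset.univ.filter (· ∈ (e : Sym2 V))) = {a, b} := by
  intro a b hab
  ext x
  simp [hab, Sym2.mem_iff]

lemma exists_good_big (hreg : IsRegularGraph G) (hn : 5 ≤ Fintype.card V)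
    {m : ℕ} (hm : 2 ≤ m) (u0 : V)
    (hr : (G.neighborSet u0).ncard = m + m) :
    Nonempty (Good G (Fintype.card V)) := by
  classical
  haveI : NeZero (Fintype.card V) := ⟨by omega⟩
  have hreg' : ∀ u, (G.neighborSet u).ncard = m + m := fun u => (hreg u u0).trans hr
  -- number of edges at a vertex
  have hfilter_card : ∀ v : V,
      (Finset.univ.filter (fun e : G.edgeSet => v ∈ (e : Sym2 V))).card = m + m := by
    intro v
    have h0 : ({e : G.edgeSet | v ∈ (e : Sym2 V)}).ncard = m + m := by
      rw [ncard_nbr_edges, hreg']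
    rw [← Set.toFinset_setOf, ← Set.ncard_eq_toFinset_card', h0]
  -- Hall's condition
  set t : G.edgeSet → Finset (V × Fin m) :=
    fun e => (Finset.univ.filter (· ∈ (e : Sym2 V))) ×ˢ Finset.univ with ht
  have hall : ∀ S : Finset G.edgeSet, S.card ≤ (S.biUnion t).card := by
    intro S
    set W : Finset V := S.biUnion (fun e => Finset.univ.filter (· ∈ (e : Sym2 V))) with hW
    have hBU : S.biUnion t = W ×ˢ (Finset.univ : Finset (Fin m)) := by
      ext ⟨v, i⟩
      simp [ht, hW, Finset.mem_biUnion]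
    have hcount : 2 * S.card ≤ W.card * (m + m) := by
      have h1 : ∀ e ∈ S, (Finset.univ.filter (fun v => v ∈ (e : Sym2 V))) =
          (W.filter (fun v => v ∈ (e : Sym2 V))) := by
        intro e he
        ext x
        simp only [Finset.mem_filter, Finset.mem_univ, true_and, hW, Finset.mem_biUnion]
        exact ⟨fun hx => ⟨⟨e, he, by simpa using hx⟩, hx⟩, fun hx => hx.2⟩
      have h2 : ∀ e : G.edgeSet, (Finset.univ.filter (fun v => v ∈ (e : Sym2 V))).card = 2 := by
        intro e
        obtain ⟨a, b, hab, hadj⟩ := edge_repr e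
        rw [endpoints_filter e hab, Finset.card_insert_of_notMem (by simpa using hadj.ne),
          Finset.card_singleton]
      calc 2 * S.card = ∑ _e ∈ S, 2 := by rw [Finset.sum_const, smul_eq_mul, mul_comm]
        _ = ∑ e ∈ S, (W.filter (fun v => v ∈ (e : Sym2 V))).card := by
            apply Finset.sum_congr rfl
            intro e he
            rw [← h1 e he, h2 e]
        _ = ∑ e ∈ S, ∑ v ∈ W, (if v ∈ (e : Sym2 V) then 1 else 0) := by
            apply Finset.sum_congr rfl
            intro e _
            rw [Finset.card_filter]
        _ = ∑ v ∈ W, ∑ e ∈ S, (if v ∈ (e : Sym2 V) then 1 else 0) := Finset.sum_comm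
        _ = ∑ v ∈ W, (S.filter (fun e : G.edgeSet => v ∈ (e : Sym2 V))).card := by
            apply Finset.sum_congr rfl
            intro v _
            rw [Finset.card_filter]
        _ ≤ ∑ _v ∈ W, (m + m) := by
            apply Finset.sum_le_sum
            intro v _
            rw [← hfilter_card v]
            exact Finset.card_le_card (Finset.filter_subset_filter _ (Finset.subset_univ S))
        _ = W.card * (m + m) := by rw [Finset.sum_const, smul_eq_mul]
    rw [hBU, Finset.card_product, Finset.card_univ, Fintype.card_fin]
    have h3 : W.card * (m + m) = W.card * m + W.card * m := by ring
    omega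
  obtain ⟨f, hfinj, hft⟩ := (Finset.all_card_le_biUnion_card_iff_existsInjective' t).mp hall
  have hhead : ∀ e : G.edgeSet, (f e).1 ∈ (e : Sym2 V) := by
    intro e
    have := hft e
    rw [ht] at this
    simp only [Finset.mem_product, Finset.mem_filter, Finset.mem_univ, true_and] at this
    exact this.1
  -- the out-neighbourhood
  set O : V → Set V := fun u => {v | ∃ h : G.Adj u v, (f ⟨s(u, v), h⟩).1 = v} with hO
  have hOsub : ∀ u, O u ⊆ G.neighborSet u := by
    rintro u v ⟨h, _⟩
    exact h
  have hXOR : ∀ {u v}, G.Adj u v → ((v ∈ O u) ↔ ¬ (u ∈ O v)) := by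
    intro u v hadj
    have hswap : (⟨s(v, u), hadj.symm⟩ : G.edgeSet) = ⟨s(u, v), hadj⟩ :=
      Subtype.ext (Sym2.eq_swap)
    have hmem := hhead ⟨s(u, v), hadj⟩
    rcases Sym2.mem_iff.mp hmem with h1 | h1
    · constructor
      · intro ⟨_, hv⟩ _
        exact hadj.ne (h1.symm.trans hv)
      · intro hnot
        exfalso
        apply hnot
        exact ⟨hadj.symm, by rw [hswap]; exact h1⟩
    · constructor
      · intro _ ⟨_, hu⟩
        rw [hswap] at hu
        exact hadj.ne (hu.symm.trans h1)
      · intro _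
        exact ⟨hadj, h1⟩
  have hOcard : ∀ u, 2 ≤ (O u).ncard := by
    intro u
    have hdiff : ((G.neighborSet u) \ O u).ncard ≤ m := by
      have hmemdiff : ∀ v : ↥(G.neighborSet u \ O u), G.Adj u (v : V) := fun v => v.2.1
      set g2 : ↥(G.neighborSet u \ O u) → Fin m :=
        fun v => (f ⟨s(u, (v : V)), hmemdiff v⟩).2 with hg2
      have hg2inj : Function.Injective g2 := by
        intro v w heq
        have hhv : (f ⟨s(u, (v : V)), hmemdiff v⟩).1 = u := by
          rcases Sym2.mem_iff.mp (hhead ⟨s(u, (v : V)), hmemdiff v⟩) with h1 | h1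
          · exact h1
          · exact absurd ⟨hmemdiff v, h1⟩ v.2.2
        have hhw : (f ⟨s(u, (w : V)), hmemdiff w⟩).1 = u := by
          rcases Sym2.mem_iff.mp (hhead ⟨s(u, (w : V)), hmemdiff w⟩) with h1 | h1
          · exact h1
          · exact absurd ⟨hmemdiff w, h1⟩ w.2.2
        have hfe : f ⟨s(u, (v : V)), hmemdiff v⟩ = f ⟨s(u, (w : V)), hmemdiff w⟩ := by
          apply Prod.ext
          · rw [hhv, hhw]
          · exact heq
        have := hfinj hfe
        have hsym : s(u, (v : V)) = s(u, (w : V)) := congrArg Subtype.val this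
        exact Subtype.ext (Sym2.congr_right.mp hsym)
      have := Fintype.card_le_of_injective g2 hg2inj
      rwa [Fintype.card_fin, ← Nat.card_eq_fintype_card, Nat.card_coe_set_eq] at this
    have hsplit := Set.ncard_diff_add_ncard_of_subset (hOsub u) (Set.toFinite _)
    rw [hreg' u] at hsplit
    omega
  -- fixed-point-free rotations
  have hrot : ∀ (c : ℕ), 2 ≤ c → ∀ x : Fin c, finRotate c x ≠ x := by
    intro c hc x
    match c, hc, x with
    | (k+1), hc, x =>
      rw [finRotate_succ_apply]
      intro h
      have h1 : (1 : Fin (k+1)) = 0 := left_eq_add.mp h.symm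
      rw [Fin.one_eq_zero_iff] at h1
      omega
  let A : V → V → V := fun u v =>
    if h : v ∈ O u then
      ((Fintype.equivFin ↥(O u)).symm (finRotate _ ((Fintype.equivFin ↥(O u)) ⟨v, h⟩)) : V)
    else v
  have hAO : ∀ u v (h : v ∈ O u), A u v ∈ O u := by
    intro u v h
    show (if h : v ∈ O u then _ else v) ∈ O u
    rw [dif_pos h]
    exact Subtype.mem _
  have hAfpf : ∀ u v (h : v ∈ O u), A u v ≠ v := by
    intro u v h heq
    rw [show A u v = ((Fintype.equivFin ↥(O u)).symm
      (finRotate _ ((Fintype.equivFin ↥(O u)) ⟨v, h⟩)) : V) from dif_pos h] at heq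
    have h2 : (Fintype.equivFin ↥(O u)).symm (finRotate _ ((Fintype.equivFin ↥(O u)) ⟨v, h⟩))
        = ⟨v, h⟩ := Subtype.coe_injective heq
    have h3 := congrArg (Fintype.equivFin ↥(O u)) h2
    rw [Equiv.apply_symm_apply] at h3
    have hc : 2 ≤ Fintype.card ↥(O u) := by
      rw [← Nat.card_eq_fintype_card, Nat.card_coe_set_eq]
      exact hOcard u
    exact hrot _ hc _ h3
  have hAnotO : ∀ u v, v ∉ O u → A u v = v := fun u v h => dif_neg h
  -- κ
  let κe : V ≃ ZMod (Fintype.card V) :=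
    Fintype.equivOfCardEq (by rw [ZMod.card])
  refine ⟨⟨fun v => κe v, A, fun a b hab => κe.injective hab, ?_, ?_, ?_⟩⟩
  · intro u v hadj
    by_cases h : v ∈ O u
    · exact hOsub u (hAO u v h)
    · rw [hAnotO u v h]; exact hadj
  · intro u v w hv hw heq
    by_cases h1 : v ∈ O u <;> by_cases h2 : w ∈ O u
    · rw [show A u v = _ from dif_pos h1, show A u w = _ from dif_pos h2] at heq
      have h3 := Subtype.coe_injective heq
      have h4 := (Fintype.equivFin ↥(O u)).symm.injective h3
      have h5 := (finRotate _).injective h4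
      have h6 := (Fintype.equivFin ↥(O u)).injective h5
      exact congrArg Subtype.val h6
    · exfalso
      rw [hAnotO u w h2] at heq
      have h3 := hAO u v h1
      rw [heq] at h3
      exact h2 h3
    · exfalso
      rw [hAnotO u v h1] at heq
      have h3 := hAO u w h2
      rw [← heq] at h3
      exact h1 h3
    · rw [hAnotO u v h1, hAnotO u w h2] at heq
      exact heq
  · intro u v hadj heq
    rcases (iff_iff_and_or_not_and_not.mp (hXOR hadj)) with ⟨h1, h2⟩ | ⟨h1, h2⟩
    · rw [hAnotO v u h2] at heq
      rw [add_comm (κe v) (κe u)] at heq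
      have h3 := κe.injective (add_left_cancel heq)
      exact hAfpf u v h1 h3
    · rw [not_not] at h2
      rw [hAnotO u v h1] at heq
      rw [add_comm (κe u) (κe v)] at heq
      have h3 := κe.injective (add_left_cancel heq).symm
      exact hAfpf v u h2 h3

end Stmt12Aux
namespace Stmt12Aux
open SimpleGraph Set

variable {V : Type*} [Fintype V] {G : SimpleGraph V}

lemma exists_good_two (hconn : G.Connected) (hn : 5 ≤ Fintype.card V)
    (hdeg2 : ∀ u : V, (G.neighborSet u).ncard = 2) :
    Nonempty (Good G (Fintype.card V)) := by
  classical
  haveI : NeZero (Fintype.card V) := ⟨by omega⟩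
  haveI hVne : Nonempty V := by rw [← Fintype.card_pos_iff]; omega
  -- the "other neighbour" function
  have hother : ∀ (u w : V), G.Adj u w →
      ∃ z, (G.Adj u z ∧ z ≠ w) ∧ ∀ y, G.Adj u y → y ≠ w → y = z := by
    intro u w hw
    obtain ⟨a, b, hab, hNab⟩ := Set.ncard_eq_two.mp (hdeg2 u)
    have hwmem : w ∈ G.neighborSet u := hw
    have hamem : a ∈ G.neighborSet u := by rw [hNab]; exact Set.mem_insert _ _
    have hbmem : b ∈ G.neighborSet u := by rw [hNab]; exact Set.mem_insert_of_mem _ rfl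
    rw [hNab] at hwmem
    rcases hwmem with rfl | hwb
    · refine ⟨b, ⟨hbmem, Ne.symm hab⟩, ?_⟩
      intro y hy hyw
      have : y ∈ G.neighborSet u := hy
      rw [hNab] at this
      rcases this with rfl | h
      · exact absurd rfl hyw
      · exact h
    · rw [Set.mem_singleton_iff] at hwb
      subst hwb
      refine ⟨a, ⟨hamem, hab⟩, ?_⟩
      intro y hy hyw
      have : y ∈ G.neighborSet u := hy
      rw [hNab] at this
      rcases this with h | h
      · exact h
      · exact absurd h hyw
  choose oth hoth using hother
  let othF : V → V → V := fun u w => if h : G.Adj u w then oth u w h else w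
  have othF_adj : ∀ {u w}, G.Adj u w → G.Adj u (othF u w) := by
    intro u w h
    show G.Adj u (if h' : G.Adj u w then _ else _)
    rw [dif_pos h]
    exact (hoth u w h).1.1
  have othF_ne : ∀ {u w}, G.Adj u w → othF u w ≠ w := by
    intro u w h
    show (if h' : G.Adj u w then _ else _) ≠ w
    rw [dif_pos h]
    exact (hoth u w h).1.2
  have othF_uniq : ∀ {u w}, G.Adj u w → ∀ y, G.Adj u y → y ≠ w → y = othF u w := by
    intro u w h y hy hyw
    show y = (if h' : G.Adj u w then _ else _)
    rw [dif_pos h]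
    exact (hoth u w h).2 y hy hyw
  have othF_inv : ∀ {u w}, G.Adj u w → othF u (othF u w) = w := by
    intro u w h
    exact (othF_uniq (othF_adj h) w h (Ne.symm (othF_ne h))).symm
  -- the walk
  obtain ⟨u0⟩ := hVne
  obtain ⟨w0, hw0⟩ : (G.neighborSet u0).Nonempty := by
    rw [← Set.ncard_pos (Set.toFinite _), hdeg2 u0]; omega
  let step : V × V → V × V := fun q => if G.Adj q.1 q.2 then (q.2, othF q.2 q.1) else q
  let prev : V × V → V × V := fun q => if G.Adj q.1 q.2 then (othF q.1 q.2, q.1) else q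
  have hstep_eq : ∀ q : V × V, G.Adj q.1 q.2 → step q = (q.2, othF q.2 q.1) :=
    fun q h => if_pos h
  have hprev_eq : ∀ q : V × V, G.Adj q.1 q.2 → prev q = (othF q.1 q.2, q.1) :=
    fun q h => if_pos h
  let p : ℕ → V × V := fun k => step^[k] (u0, w0)
  have hps : ∀ k, p (k + 1) = step (p k) := fun k => Function.iterate_succ_apply' step k _
  have hPadj : ∀ k, G.Adj (p k).1 (p k).2 := by
    intro k
    induction k with
    | zero => exact hw0
    | succ k ih =>
      rw [hps k, hstep_eq _ ih]
      exact othF_adj ih.symm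
  have hsnd : ∀ k, (p k).2 = (p (k + 1)).1 := by
    intro k
    rw [hps k, hstep_eq _ (hPadj k)]
  have hprevp : ∀ k, prev (p (k + 1)) = p k := by
    intro k
    rw [hps k, hstep_eq _ (hPadj k)]
    have h2 : G.Adj (p k).2 (othF (p k).2 (p k).1) := othF_adj (hPadj k).symm
    rw [hprev_eq _ h2]
    show (othF (p k).2 (othF (p k).2 (p k).1), (p k).2) = p k
    rw [othF_inv (hPadj k).symm]
  -- back-stepping
  have hdownN : ∀ a b, p (a + 1) = p (b + 1) → p a = p b := by
    intro a b h
    have := congrArg prev h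
    rwa [hprevp a, hprevp b] at this
  have hdown_iter : ∀ (s a b : ℕ), p (a + s) = p (b + s) → p a = p b := by
    intro s
    induction s with
    | zero => intro a b h; simpa using h
    | succ s ih =>
      intro a b h
      exact ih a b (hdownN (a + s) (b + s) h)
  -- periodicity
  have hT0 : ∃ t, 0 < t ∧ p t = p 0 := by
    obtain ⟨i, j, hij, hpij⟩ := Finite.exists_ne_map_eq_of_infinite p
    rcases Ne.lt_or_gt hij with hlt | hlt
    · refine ⟨j - i, by omega, ?_⟩
      have := hdown_iter i 0 (j - i) (by
        rw [Nat.zero_add, Nat.sub_add_cancel (le_of_lt hlt)]; exact hpij)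
      exact this.symm
    · refine ⟨i - j, by omega, ?_⟩
      have := hdown_iter j 0 (i - j) (by
        rw [Nat.zero_add, Nat.sub_add_cancel (le_of_lt hlt)]; exact hpij.symm)
      exact this.symm
  set T := Nat.find hT0 with hTdef
  obtain ⟨hTpos, hTper⟩ := Nat.find_spec hT0
  have hper : ∀ k, p (k + T) = p k := by
    intro k
    induction k with
    | zero => rw [Nat.zero_add]; exact hTper
    | succ k ih =>
      rw [show k + 1 + T = (k + T) + 1 by omega, hps (k + T), hps k, ih]
  have hpermult : ∀ (s k : ℕ), p (k + s * T) = p k := by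
    intro s
    induction s with
    | zero => intro k; simp
    | succ s ih =>
      intro k
      rw [show k + (s + 1) * T = (k + s * T) + T by ring, hper, ih]
  -- injectivity of p on [0, T)
  have hinj : ∀ a b, a < T → b < T → p a = p b → a = b := by
    have key : ∀ a b, a < b → b < T → p a ≠ p b := by
      intro a b hab hbT h
      have h0 : p 0 = p (b - a) := hdown_iter a 0 (b - a) (by
        rw [Nat.zero_add, Nat.sub_add_cancel (le_of_lt hab)]; exact h)
      exact Nat.find_min hT0 (show b - a < T by omega) ⟨by omega, h0.symm⟩
    intro a b ha hb h
    rcases lt_trichotomy a b with hlt | heq | hlt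
    · exact absurd h (key a b hlt hb)
    · exact heq
    · exact absurd h.symm (key b a hlt ha)
  -- no reflections
  have hswapstep : ∀ q : V × V, G.Adj q.1 q.2 → step (Prod.swap (step q)) = Prod.swap q := by
    intro q h
    rw [hstep_eq q h]
    have h2 : G.Adj (othF q.2 q.1) q.2 := (othF_adj h.symm).symm
    show step (othF q.2 q.1, q.2) = (q.2, q.1)
    rw [hstep_eq (othF q.2 q.1, q.2) h2]
    show (q.2, othF q.2 (othF q.2 q.1)) = (q.2, q.1)
    rw [othF_inv h.symm]
  have href_prop : ∀ l j s, p l = Prod.swap (p j) → s ≤ j →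
      p (l + s) = Prod.swap (p (j - s)) := by
    intro l j s
    induction s with
    | zero => intro h _; simpa using h
    | succ s ih =>
      intro h hs
      have ihs := ih h (by omega)
      have hj : j - s = (j - (s + 1)) + 1 := by omega
      rw [hj, hps (j - (s + 1))] at ihs
      rw [show l + (s + 1) = (l + s) + 1 by omega, hps (l + s), ihs,
        hswapstep _ (hPadj (j - (s + 1)))]
  have hnoref : ∀ l j, p l ≠ Prod.swap (p j) := by
    intro l j href
    have href' : p l = Prod.swap (p (j + l * T)) := by rw [hpermult l j]; exact href
    set j' := j + l * T with hj'
    have hlj : l ≤ j' := by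
      have : l * 1 ≤ l * T := Nat.mul_le_mul_left l hTpos
      omega
    rcases Nat.even_or_odd (j' - l) with ⟨s, hs⟩ | ⟨s, hs⟩
    · have h1 := href_prop l j' s href' (by omega)
      rw [show j' - s = l + s by omega] at h1
      have hfst := congrArg Prod.fst h1
      exact G.ne_of_adj (hPadj (l + s)) hfst
    · have h1 := href_prop l j' (s + 1) href' (by omega)
      rw [show j' - (s + 1) = l + s by omega] at h1
      rw [show l + (s + 1) = (l + s) + 1 by omega, hps (l + s),
        hstep_eq _ (hPadj (l + s))] at h1
      have hsnd2 := congrArg Prod.snd h1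
      exact othF_ne (hPadj (l + s)).symm hsnd2
  -- first components
  set g : ℕ → V := fun k => (p k).1 with hgdef
  have hg1 : ∀ k, G.Adj (g k) (g (k + 1)) := by
    intro k
    have := hPadj k
    rwa [hsnd k] at this
  have hgoth : ∀ k, othF (g (k + 1)) (g (k + 2)) = g k := by
    intro k
    have h1 := hprevp k
    rw [hprev_eq _ (hPadj (k + 1))] at h1
    have := congrArg Prod.fst h1
    simp only at this
    rwa [hsnd (k + 1)] at this
  have hginj : ∀ a b, a < T → b < T → g a = g b → a = b := by
    intro a b ha hb hgab
    have hg' : (p a).1 = (p b).1 := hgab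
    by_contra hne
    have hpne : p a ≠ p b := fun h => hne (hinj a b ha hb h)
    have h2 : (p b).2 ≠ (p a).2 := by
      intro h
      exact hpne (Prod.ext hg' h.symm)
    have hob : (p b).2 = othF (p a).1 (p a).2 := by
      apply othF_uniq (hPadj a)
      · rw [hg']; exact hPadj b
      · exact h2
    have hswap : prev (p a) = Prod.swap (p b) := by
      rw [hprev_eq _ (hPadj a)]
      apply Prod.ext
      · exact hob.symm
      · exact hg'
    have ha' : prev (p a) = p (a + T - 1) := by
      have h3 : p a = p ((a + T - 1) + 1) := by
        rw [show (a + T - 1) + 1 = a + T by omega, hper a]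
      rw [h3, hprevp]
    rw [ha'] at hswap
    exact hnoref _ _ hswap
  have hgmod : ∀ k, g (k % T) = g k := by
    intro k
    have h1 := hpermult (k / T) (k % T)
    rw [Nat.mod_add_div'] at h1
    exact (congrArg Prod.fst h1).symm
  have hclosed : ∀ u, (∃ k, g k = u) → ∀ v, G.Adj u v → ∃ k, g k = v := by
    rintro u ⟨k, rfl⟩ v hadj
    by_cases hv : v = (p k).2
    · exact ⟨k + 1, ((hsnd k).symm.trans hv.symm : (p (k + 1)).1 = v)⟩
    · have hvo : v = othF (g k) ((p k).2) := othF_uniq (hPadj k) v hadj hv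
      refine ⟨k + T - 1, ?_⟩
      have h3 : p k = p ((k + T - 1) + 1) := by
        rw [show (k + T - 1) + 1 = k + T by omega, hper k]
      have h4 : prev (p k) = p (k + T - 1) := by rw [h3, hprevp]
      rw [hprev_eq _ (hPadj k)] at h4
      have h5 := congrArg Prod.fst h4
      exact (hvo.trans h5).symm
  have hsurj : ∀ v, ∃ k, g k = v := by
    have hwalk : ∀ (a b : V), G.Walk a b → (∃ k, g k = a) → (∃ k, g k = b) := by
      intro a b w
      induction w with
      | nil => exact id
      | cons h q ih => exact fun ha => ih (hclosed _ ha _ h)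
    intro v
    obtain ⟨w⟩ := hconn u0 v
    exact hwalk u0 v w ⟨0, rfl⟩
  -- the bijection
  let F : Fin T → V := fun i => g i
  have hFbij : Function.Bijective F := by
    constructor
    · intro a b h
      exact Fin.ext (hginj a b a.isLt b.isLt h)
    · intro v
      obtain ⟨k, hk⟩ := hsurj v
      exact ⟨⟨k % T, Nat.mod_lt _ hTpos⟩, (hgmod k).trans hk⟩
  have hTn : T = Fintype.card V := by
    have := Fintype.card_of_bijective hFbij
    rwa [Fintype.card_fin] at this
  let eF : Fin T ≃ V := Equiv.ofBijective F hFbij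
  let κ : V → ZMod (Fintype.card V) := fun v => ((eF.symm v : Fin T) : ℕ)
  have hκg : ∀ k : ℕ, κ (g k) = (k : ZMod (Fintype.card V)) := by
    intro k
    have h1 : eF.symm (g k) = ⟨k % T, Nat.mod_lt _ hTpos⟩ := by
      apply eF.injective
      rw [Equiv.apply_symm_apply]
      show g k = g (k % T)
      exact (hgmod k).symm
    show ((eF.symm (g k) : Fin T) : ℕ) = ((k : ℕ) : ZMod (Fintype.card V))
    rw [h1]
    show ((k % T : ℕ) : ZMod (Fintype.card V)) = (k : ZMod (Fintype.card V))
    rw [hTn, ZMod.natCast_mod]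
  have hκinj : Function.Injective κ := by
    intro u v h
    have hu : ((eF.symm u : Fin T) : ℕ) < Fintype.card V := by
      rw [← hTn]; exact (eF.symm u).isLt
    have hv : ((eF.symm v : Fin T) : ℕ) < Fintype.card V := by
      rw [← hTn]; exact (eF.symm v).isLt
    have h2 := congrArg ZMod.val h
    rw [ZMod.val_cast_of_lt hu, ZMod.val_cast_of_lt hv] at h2
    have h3 : eF.symm u = eF.symm v := Fin.ext h2
    have := congrArg eF h3
    rwa [Equiv.apply_symm_apply, Equiv.apply_symm_apply] at this
  -- neighbourhoods along the cycle
  have hoth_pred : ∀ j, othF (g (j + 1)) (g j) = g (j + 2) := by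
    intro j
    have h1 : othF (g (j + 1)) (g (j + 2)) = g j := hgoth j
    calc othF (g (j + 1)) (g j)
        = othF (g (j + 1)) (othF (g (j + 1)) (g (j + 2))) := by rw [h1]
      _ = g (j + 2) := othF_inv (hg1 (j + 1))
  have hNg : ∀ k, G.neighborSet (g (k + 1)) = {g k, g (k + 2)} := by
    intro k
    have h1 : G.Adj (g (k + 1)) (g k) := (hg1 k).symm
    have h2 : G.Adj (g (k + 1)) (g (k + 2)) := hg1 (k + 1)
    have hne : g k ≠ g (k + 2) := by
      have := othF_ne (hg1 (k + 1))
      rwa [hgoth k] at this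
    refine (Set.eq_of_subset_of_ncard_le ?_ ?_ (Set.toFinite _)).symm
    · intro x hx
      rcases hx with rfl | hx
      · exact h1
      · rw [Set.mem_singleton_iff] at hx
        subst hx
        exact h2
    · rw [hdeg2, Set.ncard_pair hne]
  -- the inequality
  have h4ne : (4 : ZMod (Fintype.card V)) ≠ 0 := by
    have : ((4 : ℕ) : ZMod (Fintype.card V)) ≠ 0 := by
      rw [Ne, ZMod.natCast_eq_zero_iff]
      intro hdvd
      have := Nat.le_of_dvd (by norm_num) hdvd
      omega
    simpa using this
  have hcond4 : ∀ j : ℕ, κ (g (j + 1)) + κ (g j) ≠ κ (g (j + 2)) + κ (g (j + 3)) := by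
    intro j h
    rw [hκg, hκg, hκg, hκg] at h
    push_cast at h
    apply h4ne
    linear_combination h.symm
  -- assemble
  refine ⟨⟨κ, othF, hκinj, fun {u v} h => othF_adj h, ?_, ?_⟩⟩
  · intro u v w hv hw heq
    calc v = othF u (othF u v) := (othF_inv hv).symm
      _ = othF u (othF u w) := by rw [heq]
      _ = w := othF_inv hw
  · intro u v hadj heq
    obtain ⟨k0, hk0⟩ := hsurj u
    have hu2 : g (k0 + 2 * T) = u :=
      (congrArg Prod.fst (hpermult 2 k0)).trans hk0
    obtain ⟨j, hj⟩ : ∃ j, k0 + 2 * T = j + 2 := ⟨k0 + 2 * T - 2, by omega⟩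
    rw [hj] at hu2
    subst hu2
    have hvmem : v ∈ G.neighborSet (g ((j + 1) + 1)) := hadj
    rw [hNg (j + 1)] at hvmem
    rcases hvmem with rfl | hv2
    · rw [hoth_pred (j + 1), hgoth j] at heq
      exact hcond4 j heq.symm
    · rw [Set.mem_singleton_iff] at hv2
      subst hv2
      rw [show (j + 1) + 2 = j + 3 by omega] at heq
      rw [show (j + 1) + 1 = j + 2 by omega] at heq
      rw [hgoth (j + 1), hoth_pred (j + 2)] at heq
      rw [show (j + 2) + 1 = j + 3 by omega, show (j + 2) + 2 = j + 4 by omega] at heq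
      exact hcond4 (j + 1) (by
        rw [show (j + 1) + 1 = j + 2 by omega, show (j + 1) + 2 = j + 3 by omega,
          show (j + 1) + 3 = j + 4 by omega]
        exact heq)
end Stmt12Aux
namespace Stmt12Aux
open SimpleGraph Set

variable {V : Type*} [Fintype V] {G : SimpleGraph V}

lemma exists_good (hconn : G.Connected) (hreg : IsRegularGraph G)
    (hn : 5 ≤ Fintype.card V) (hodd : Odd (Fintype.card V)) :
    Nonempty (Good G (Fintype.card V)) := by
  classical
  haveI hVne : Nonempty V := by rw [← Fintype.card_pos_iff]; omega
  obtain ⟨u0⟩ := hVne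
  have hreg' : ∀ u, (G.neighborSet u).ncard = (G.neighborSet u0).ncard :=
    fun u => hreg u u0
  have hr1 : 1 ≤ (G.neighborSet u0).ncard := by
    obtain ⟨w, hw⟩ := Fintype.exists_ne_of_one_lt_card (by omega) u0
    obtain ⟨pw⟩ := hconn u0 w
    cases pw with
    | nil => exact absurd rfl (Ne.symm hw)
    | @cons _ b _ h q =>
      have hne : (G.neighborSet u0).Nonempty := ⟨b, h⟩
      have := (Set.ncard_pos (Set.toFinite _)).mpr hne
      omega
  have heven : Even ((G.neighborSet u0).ncard) := by
    have hsum := G.sum_degrees_eq_twice_card_edges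
    have hdeg : ∀ u : V, G.degree u = (G.neighborSet u0).ncard := by
      intro u
      rw [← ncard_nbr_eq_degree]
      exact hreg' u
    rw [Finset.sum_congr rfl (fun u _ => hdeg u), Finset.sum_const, smul_eq_mul, Finset.card_univ] at hsum
    have heq : Even (Fintype.card V * (G.neighborSet u0).ncard) :=
      ⟨G.edgeFinset.card, by omega⟩
    rcases Nat.even_mul.mp heq with h | h
    · exact absurd h (Nat.not_even_iff_odd.mpr hodd)
    · exact h
  rcases eq_or_ne ((G.neighborSet u0).ncard) 2 with h2 | hne2
  · exact exists_good_two hconn hn (fun u => (hreg' u).trans h2)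
  · obtain ⟨m, hm⟩ := heven
    have hm2 : 2 ≤ m := by omega
    exact exists_good_big hreg hn hm2 u0 hm

end Stmt12Aux

/-- For a connected regular graph `G` of odd order `n ≥ 5`,
`χ''_D(C(G)) = Δ(C(G)) + 1 = n`; consequently `C(G)` is Type 1. -/
theorem stmt_12 {V : Type*} [Fintype V] (G : SimpleGraph V)
    (hconn : G.Connected) (hreg : IsRegularGraph G)
    (hn : 5 ≤ Fintype.card V) (hodd : Odd (Fintype.card V)) :
    totalDistinguishingChromaticNumber (centralGraph G) = maxDeg (centralGraph G) + 1 ∧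
    maxDeg (centralGraph G) + 1 = Fintype.card V ∧
    totalChromaticNumber (centralGraph G) = maxDeg (centralGraph G) + 1 := by
  classical
  have hmd : maxDeg (centralGraph G) = Fintype.card V - 1 := Stmt12Aux.maxDeg_cg hn
  obtain ⟨g⟩ := Stmt12Aux.exists_good hconn hreg hn hodd
  obtain ⟨f, hf, hvert⟩ := Stmt12Aux.exists_coloring hn hodd g
  have hdist := Stmt12Aux.coloring_distinguishing hn f hvert
  have hmemD : Fintype.card V ∈
      {d | ∃ f : (V ⊕ G.edgeSet) ⊕ (centralGraph G).edgeSet → Fin d,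
        IsProperTotalColoring (centralGraph G) f ∧
        ∀ φ : centralGraph G ≃g centralGraph G,
          PreservesTotalColoring (centralGraph G) f φ → ∀ v, φ v = v} :=
    ⟨f, hf, fun φ hp => hdist φ hp⟩
  have hmemT : Fintype.card V ∈
      {d | ∃ f : (V ⊕ G.edgeSet) ⊕ (centralGraph G).edgeSet → Fin d,
        IsProperTotalColoring (centralGraph G) f} := ⟨f, hf⟩
  have hD : totalDistinguishingChromaticNumber (centralGraph G) = Fintype.card V := by
    apply le_antisymm
    · exact Nat.sInf_le hmemD
    · apply le_csInf ⟨_, hmemD⟩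
      rintro d ⟨f', hf', _⟩
      exact Stmt12Aux.lower_bound hn f' hf'
  have hT : totalChromaticNumber (centralGraph G) = Fintype.card V := by
    apply le_antisymm
    · exact Nat.sInf_le hmemT
    · apply le_csInf ⟨_, hmemT⟩
      rintro d ⟨f', hf'⟩
      exact Stmt12Aux.lower_bound hn f' hf'
  refine ⟨?_, ?_, ?_⟩
  · rw [hD, hmd]; omega
  · rw [hmd]; omega
  · rw [hT, hmd]; omega
end
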